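/- arXiv:1511.06664 — 3 statements merged into one kernel-verified Lean document; each statement's English description precedes it below -/
import Mathlib

section
/- Define ω ∈ S_{m+n} by ω(i) = m+1-i for i ∈ {1,...,m} and ω(i) = 2m+n+1-i for i ∈ {m+1,...,m+n}. Let C be an m×n Cauchon diagram with associated permutation v, let k ∈ {n+1,...,m+n-1}, and let (x_1,y_1),...,(x_t,y_t) be the chain rooted at box k on the south-east border. Then ({1,...,m} \ {m+1-x_i : 1 ≤ i ≤ t}) ∪ {2m+n+1-y_i : 1 ≤ i ≤ t} = ({1,...,m+n} \ (ω∘v)({1,...,k})) ∪ {m+n-k+1,...,m}, where (ω∘v)({1,...,k}) denotes the image of {1,...,k} under the composite ω∘v. -/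
/-- The transposition `s_{a+b-m-1} = (a+b-m-1, a+b-m)` assigned to the grid square `(a,b)`. -/
def sqPerm (m : ℕ) (p : ℕ × ℕ) : Equiv.Perm ℕ :=
  Equiv.swap (p.1 + p.2 - m - 1) (p.1 + p.2 - m)

/-- The reading word of the set of grid squares satisfying `P`: rows are read from the
top (`a = m`) down to the bottom (`a = 1`), and within each row columns are read from the
left (`b = m+1`) to the right (`b = m+n`); factors are multiplied so that the last factor
in reading order is applied first. -/
def readingWord (m n : ℕ) (P : ℕ × ℕ → Bool) : Equiv.Perm ℕ :=
  ((List.range m).map fun i =>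
    (((List.range n).map fun j =>
      if P (m - i, m + 1 + j) then sqPerm m (m - i, m + 1 + j) else 1)).prod).prod

/-- `(a,b)` is a square of the `m × n` grid: `1 ≤ a ≤ m`, `m+1 ≤ b ≤ m+n`. -/
def InGrid (m n : ℕ) (p : ℕ × ℕ) : Prop :=
  1 ≤ p.1 ∧ p.1 ≤ m ∧ m + 1 ≤ p.2 ∧ p.2 ≤ m + n

/-- A colouring (`true` = black, `false` = white) is a Cauchon diagram if for every black
square `(a,b)`, either every square `(a,b')` with `b' < b` is black, or every square
`(a',b)` with `a' > a` is black. -/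
def IsCauchon (m n : ℕ) (col : ℕ × ℕ → Bool) : Prop :=
  ∀ a b, InGrid m n (a, b) → col (a, b) = true →
    (∀ b', m + 1 ≤ b' → b' < b → col (a, b') = true) ∨
    (∀ a', a < a' → a' ≤ m → col (a', b) = true)

/-- The permutation associated to a colouring: the reading word of its set of black squares. -/
def assocPerm (m n : ℕ) (col : ℕ × ℕ → Bool) : Equiv.Perm ℕ :=
  readingWord m n col

/-- `v_{x,y}`: the reading word of the black squares `(a,b)` with `a ≥ x` and `b ≤ y`. -/
def vAt (m n : ℕ) (col : ℕ × ℕ → Bool) (x y : ℕ) : Equiv.Perm ℕ :=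
  readingWord m n fun p => col p && decide (x ≤ p.1) && decide (p.2 ≤ y)

/-- `w_{x,y}`: the reading word of all grid squares `(a,b)` with `a ≥ x` and `b ≤ y`. -/
def wAt (m n x y : ℕ) : Equiv.Perm ℕ :=
  readingWord m n fun p => decide (x ≤ p.1) && decide (p.2 ≤ y)

/-- Box `k` on the south-east border: `(1, m+k)` if `k ≤ n`, and `(k-n+1, m+n)` otherwise. -/
def boxSE (m n k : ℕ) : ℕ × ℕ :=
  if k ≤ n then (1, m + k) else (k - n + 1, m + n)

/-- `(X 1, Y 1), ..., (X t, Y t)` is the chain rooted at the square `(x,y)` of the colouring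
`col` (with `t = 0` for the empty chain). -/
def IsChainRootedAt (m n : ℕ) (col : ℕ × ℕ → Bool) (x y : ℕ)
    (t : ℕ) (X Y : ℕ → ℕ) : Prop :=
  -- every member of the chain is a white square of the grid
  (∀ i, 1 ≤ i → i ≤ t → InGrid m n (X i, Y i) ∧ col (X i, Y i) = false) ∧
  -- if `(x,y)` is white, the chain starts at `(x,y)`
  (col (x, y) = false → 1 ≤ t ∧ X 1 = x ∧ Y 1 = y) ∧
  -- if `(x,y)` is black and the chain is nonempty, it starts at the white square
  -- weakly north-west of `(x,y)` nearest to it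
  (col (x, y) = true → 1 ≤ t →
    x ≤ X 1 ∧ Y 1 ≤ y ∧
      ∀ a b, InGrid m n (a, b) → col (a, b) = false → x ≤ a → b ≤ y →
        X 1 ≤ a ∧ b ≤ Y 1) ∧
  -- the chain is empty only when there is no white square weakly north-west of `(x,y)`
  (t = 0 → ∀ a b, InGrid m n (a, b) → col (a, b) = false → x ≤ a → b ≤ y → False) ∧
  -- inductive step: each next member is the nearest white square strictly north-west
  (∀ i, 1 ≤ i → i < t →
    X i < X (i + 1) ∧ Y (i + 1) < Y i ∧
      ∀ a b, InGrid m n (a, b) → col (a, b) = false → X i < a → b < Y i →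
        X (i + 1) ≤ a ∧ b ≤ Y (i + 1)) ∧
  -- termination: no white square strictly north-west of the last member
  (1 ≤ t → ∀ a b, InGrid m n (a, b) → col (a, b) = false → X t < a → b < Y t → False)

namespace GNAux

lemma listprod_apply_fixed (l : List (Equiv.Perm ℕ)) (z : ℕ) (h : ∀ p ∈ l, p z = z) :
    l.prod z = z := by
  induction l with
  | nil => rfl
  | cons p l ih =>
    rw [List.prod_cons, Equiv.Perm.mul_apply, ih (fun q hq => h q (List.mem_cons_of_mem _ hq)),
      h p List.mem_cons_self]

lemma listprod_mem (l : List (Equiv.Perm ℕ)) (s : Finset ℕ) (h : ∀ p ∈ l, ∀ z ∈ s, p z ∈ s) :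
    ∀ z ∈ s, l.prod z ∈ s := by
  induction l with
  | nil => intro z hz; simpa using hz
  | cons p l ih =>
    intro z hz
    rw [List.prod_cons, Equiv.Perm.mul_apply]
    exact h p List.mem_cons_self _ (ih (fun q hq => h q (List.mem_cons_of_mem _ hq)) z hz)

lemma trailing_ones {M : Type*} [Monoid M] (f : ℕ → M) (r s : ℕ) (hrs : r ≤ s)
    (h : ∀ i, r ≤ i → i < s → f i = 1) :
    ((List.range s).map f).prod = ((List.range r).map f).prod := by
  obtain ⟨d, rfl⟩ : ∃ d, s = r + d := ⟨s - r, by omega⟩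
  rw [List.range_add, List.map_append, List.prod_append]
  have : ((List.range d).map fun i => f (r + i)).prod = 1 := by
    apply List.prod_eq_one
    intro a ha
    simp only [List.mem_map, List.mem_range] at ha
    obtain ⟨i, hi, rfl⟩ := ha
    exact h _ (by omega) (by omega)
  rw [List.map_map]
  show _ * ((List.range d).map fun i => f (r + i)).prod = _
  rw [this, mul_one]

/-- The word of row `a`, columns `m+1 .. m+n`, for the colouring predicate `P`. -/
def rowW (m n : ℕ) (P : ℕ × ℕ → Bool) (a : ℕ) : Equiv.Perm ℕ :=
  ((List.range n).map fun j => if P (a, m + 1 + j) then Equiv.swap (a + j) (a + j + 1) else 1).prod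

/-- The word of the column `m+1+c` (top row down), for the colouring predicate `P`. -/
def colW (m c : ℕ) (P : ℕ × ℕ → Bool) : Equiv.Perm ℕ :=
  ((List.range m).map fun i =>
    if P (m - i, m + 1 + c) then Equiv.swap (m - i + c) (m - i + c + 1) else 1).prod

lemma sqPerm_eq (m a j : ℕ) : sqPerm m (a, m + 1 + j) = Equiv.swap (a + j) (a + j + 1) := by
  unfold sqPerm
  congr 1 <;> simp <;> omega

lemma readingWord_eq_rowW (m n : ℕ) (P : ℕ × ℕ → Bool) :
    readingWord m n P = ((List.range m).map fun i => rowW m n P (m - i)).prod := by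
  unfold readingWord rowW
  refine congrArg List.prod (List.map_congr_left fun i _ =>
    congrArg List.prod (List.map_congr_left fun j _ => ?_))
  rw [sqPerm_eq]

lemma readingWord_congr {m n : ℕ} {P Q : ℕ × ℕ → Bool}
    (h : ∀ i j, i < m → j < n → P (m - i, m + 1 + j) = Q (m - i, m + 1 + j)) :
    readingWord m n P = readingWord m n Q := by
  unfold readingWord
  refine congrArg List.prod (List.map_congr_left fun i hi =>
    congrArg List.prod (List.map_congr_left fun j hj => ?_))
  rw [h i j (List.mem_range.mp hi) (List.mem_range.mp hj)]

lemma rowW_eq_one {m n : ℕ} {P : ℕ × ℕ → Bool} {a : ℕ}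
    (h : ∀ j, j < n → P (a, m + 1 + j) = false) : rowW m n P a = 1 := by
  apply List.prod_eq_one
  intro p hp
  simp only [List.mem_map, List.mem_range] at hp
  obtain ⟨j, hj, rfl⟩ := hp
  rw [h j hj]
  simp

lemma readingWord_eq_one {m n : ℕ} {P : ℕ × ℕ → Bool}
    (h : ∀ i j, i < m → j < n → P (m - i, m + 1 + j) = false) : readingWord m n P = 1 := by
  rw [readingWord_eq_rowW]
  apply List.prod_eq_one
  intro p hp
  simp only [List.mem_map, List.mem_range] at hp
  obtain ⟨i, hi, rfl⟩ := hp
  exact rowW_eq_one (fun j hj => h i j hi hj)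

lemma rowW_apply_fixed {m n : ℕ} {P : ℕ × ℕ → Bool} {a z : ℕ}
    (h : ∀ j, j < n → P (a, m + 1 + j) = true → z ≠ a + j ∧ z ≠ a + j + 1) :
    rowW m n P a z = z := by
  apply listprod_apply_fixed
  intro p hp
  simp only [List.mem_map, List.mem_range] at hp
  obtain ⟨j, hj, rfl⟩ := hp
  by_cases hP : P (a, m + 1 + j) = true
  · obtain ⟨h1, h2⟩ := h j hj hP
    rw [if_pos hP]
    exact Equiv.swap_apply_of_ne_of_ne h1 h2
  · rw [if_neg hP]; rfl

lemma readingWord_apply_fixed {m n : ℕ} {P : ℕ × ℕ → Bool} {z : ℕ}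
    (h : ∀ i j, i < m → j < n → P (m - i, m + 1 + j) = true →
      z ≠ (m - i) + j ∧ z ≠ (m - i) + j + 1) :
    readingWord m n P z = z := by
  rw [readingWord_eq_rowW]
  apply listprod_apply_fixed
  intro p hp
  simp only [List.mem_map, List.mem_range] at hp
  obtain ⟨i, hi, rfl⟩ := hp
  exact rowW_apply_fixed (fun j hj hP => h i j hi hj hP)

lemma colW_apply_fixed {m c : ℕ} {P : ℕ × ℕ → Bool} {z : ℕ}
    (h : ∀ i, i < m → P (m - i, m + 1 + c) = true → z ≠ (m - i) + c ∧ z ≠ (m - i) + c + 1) :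
    colW m c P z = z := by
  apply listprod_apply_fixed
  intro p hp
  simp only [List.mem_map, List.mem_range] at hp
  obtain ⟨i, hi, rfl⟩ := hp
  by_cases hP : P (m - i, m + 1 + c) = true
  · obtain ⟨h1, h2⟩ := h i hi hP
    rw [if_pos hP]
    exact Equiv.swap_apply_of_ne_of_ne h1 h2
  · rw [if_neg hP]; rfl

lemma swap_mem_Icc {lo hi u z : ℕ} (h1 : lo ≤ u) (h2 : u + 1 ≤ hi) (hz : z ∈ Finset.Icc lo hi) :
    Equiv.swap u (u + 1) z ∈ Finset.Icc lo hi := by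
  simp only [Finset.mem_Icc] at *
  rcases eq_or_ne z u with rfl | h3
  · rw [Equiv.swap_apply_left]; omega
  rcases eq_or_ne z (u + 1) with rfl | h4
  · rw [Equiv.swap_apply_right]; omega
  · rw [Equiv.swap_apply_of_ne_of_ne h3 h4]; omega

lemma rowW_mem_Icc {m n : ℕ} {P : ℕ × ℕ → Bool} {a lo hi : ℕ}
    (h : ∀ j, j < n → P (a, m + 1 + j) = true → lo ≤ a + j ∧ a + j + 1 ≤ hi) :
    ∀ z ∈ Finset.Icc lo hi, rowW m n P a z ∈ Finset.Icc lo hi := by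
  apply listprod_mem
  intro p hp
  simp only [List.mem_map, List.mem_range] at hp
  obtain ⟨j, hj, rfl⟩ := hp
  intro z hz
  by_cases hP : P (a, m + 1 + j) = true
  · rw [if_pos hP]
    exact swap_mem_Icc (h j hj hP).1 (h j hj hP).2 hz
  · rw [if_neg hP]; simpa using hz

lemma image_perm_self (s : Finset ℕ) (σ : Equiv.Perm ℕ) (h : ∀ z ∈ s, σ z ∈ s) :
    s.image σ = s := by
  apply Finset.eq_of_subset_of_card_le
  · intro z hz
    simp only [Finset.mem_image] at hz
    obtain ⟨w, hw, rfl⟩ := hz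
    exact h w hw
  · rw [Finset.card_image_of_injective _ σ.injective]


/-- Splitting off the bottom row `x` when `P` is false below row `x`. -/
lemma split_bottom {m n : ℕ} (P : ℕ × ℕ → Bool) (x : ℕ) (hx1 : 1 ≤ x) (hxm : x ≤ m)
    (hb : ∀ a j, a < x → j < n → P (a, m + 1 + j) = false) :
    readingWord m n P =
      readingWord m n (fun p => P p && decide (x + 1 ≤ p.1)) * rowW m n P x := by
  rw [readingWord_eq_rowW, readingWord_eq_rowW]
  have h1 : ((List.range m).map fun i => rowW m n P (m - i)).prod
      = ((List.range (m - x + 1)).map fun i => rowW m n P (m - i)).prod := by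
    apply trailing_ones _ _ _ (by omega)
    intro i hi _
    exact rowW_eq_one (fun j hj => hb _ j (by omega) hj)
  have h2 : ((List.range m).map fun i => rowW m n (fun p => P p && decide (x + 1 ≤ p.1)) (m - i)).prod
      = ((List.range (m - x)).map fun i => rowW m n (fun p => P p && decide (x + 1 ≤ p.1)) (m - i)).prod := by
    apply trailing_ones _ _ _ (by omega)
    intro i hi him
    apply rowW_eq_one
    intro j hj
    have : ¬ (x + 1 ≤ m - i) := by omega
    simp [this]
  rw [h1, h2]
  have h3 : m - x + 1 = (m - x) + 1 := rfl
  rw [h3, List.range_succ, List.map_append, List.prod_append]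
  have h4 : m - (m - x) = x := by omega
  simp only [List.map_cons, List.map_nil, List.prod_cons, List.prod_nil, mul_one, h4]
  congr 1
  refine congrArg List.prod (List.map_congr_left fun i hi => ?_)
  simp only [List.mem_range] at hi
  unfold rowW
  refine congrArg List.prod (List.map_congr_left fun j _ => ?_)
  refine if_congr ?_ rfl rfl
  simp only [Bool.and_eq_true, decide_eq_true_eq]
  exact ⟨fun h => ⟨h, by omega⟩, fun h => h.1⟩

/-- Splitting off the rightmost column `m+1+c` when `P` is false to the right of it. -/
lemma split_right {m n : ℕ} (P : ℕ × ℕ → Bool) (c : ℕ) (hc : c < n)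
    (hr : ∀ a j, j < n → c < j → P (a, m + 1 + j) = false) :
    readingWord m n P =
      readingWord m n (fun p => P p && decide (p.2 ≤ m + c)) * colW m c P := by
  set Q : ℕ × ℕ → Bool := fun p => P p && decide (p.2 ≤ m + c) with hQ
  -- row-level split
  have row_split : ∀ a, rowW m n P a = rowW m n Q a *
      (if P (a, m + 1 + c) then Equiv.swap (a + c) (a + c + 1) else 1) := by
    intro a
    have e1 : rowW m n P a = ((List.range (c + 1)).map
        fun j => if P (a, m + 1 + j) then Equiv.swap (a + j) (a + j + 1) else 1).prod := by
      unfold rowW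
      apply trailing_ones _ _ _ (by omega)
      intro j hj hjn
      rw [hr a j hjn (by omega)]
      simp
    have e2 : rowW m n Q a = ((List.range c).map
        fun j => if Q (a, m + 1 + j) then Equiv.swap (a + j) (a + j + 1) else 1).prod := by
      unfold rowW
      apply trailing_ones _ _ _ (by omega)
      intro j hj hjn
      have : Q (a, m + 1 + j) = false := by
        by_cases hP : P (a, m + 1 + j) = true
        · have : ¬ (m + 1 + j ≤ m + c) := by omega
          simp [hQ, this]
        · simp [hQ, Bool.eq_false_iff.mpr hP]
      rw [this]; simp
    rw [e1, e2, List.range_succ, List.map_append, List.prod_append]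
    simp only [List.map_cons, List.map_nil, List.prod_cons, List.prod_nil, mul_one]
    congr 1
    refine congrArg List.prod (List.map_congr_left fun j hj => ?_)
    simp only [List.mem_range] at hj
    have : decide ((a, m + 1 + j).2 ≤ m + c) = true := by simp; omega
    simp only [hQ]
    rw [this, Bool.and_true]
  -- main induction over rows
  have main : ∀ r, r ≤ m →
      ((List.range r).map fun i => rowW m n P (m - i)).prod =
      ((List.range r).map fun i => rowW m n Q (m - i)).prod *
      ((List.range r).map fun i =>
        if P (m - i, m + 1 + c) then Equiv.swap (m - i + c) (m - i + c + 1) else 1).prod := by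
    intro r
    induction r with
    | zero => intro _; simp
    | succ r ih =>
      intro hrm
      have ihr := ih (by omega)
      rw [List.range_succ, List.map_append, List.prod_append, List.map_append, List.prod_append,
        List.map_append, List.prod_append]
      simp only [List.map_cons, List.map_nil, List.prod_cons, List.prod_nil, mul_one]
      rw [ihr, row_split (m - r)]
      -- now need commutation of D r with rowW Q (m - r)
      have hcomm : Commute (((List.range r).map fun i =>
          if P (m - i, m + 1 + c) then Equiv.swap (m - i + c) (m - i + c + 1) else 1).prod)
          (rowW m n Q (m - r)) := by
        apply Equiv.Perm.Disjoint.commute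
        intro z
        by_cases hz : z ≤ m - r + c
        · left
          apply listprod_apply_fixed
          intro p hp
          simp only [List.mem_map, List.mem_range] at hp
          obtain ⟨i, hi, rfl⟩ := hp
          by_cases hP : P (m - i, m + 1 + c) = true
          · rw [if_pos hP]
            apply Equiv.swap_apply_of_ne_of_ne <;> omega
          · rw [if_neg hP]; rfl
        · right
          apply rowW_apply_fixed
          intro j hj hQj
          have : m + 1 + j ≤ m + c := by
            have := hQj
            simp only [hQ, Bool.and_eq_true, decide_eq_true_eq] at this
            exact this.2
          omega
      rw [mul_assoc, mul_assoc]
      congr 1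
      rw [← mul_assoc, hcomm.eq, mul_assoc]
  rw [readingWord_eq_rowW, readingWord_eq_rowW]
  exact main m le_rfl

/-- Pointwise values of an increasing full run `s_x s_{x+1} ⋯ s_{x+r-1}` (rightmost applied
first): it adds one on `[x, x+r-1]`. -/
lemma inc_run_apply (x : ℕ) : ∀ r z, x ≤ z → z < x + r →
    ((List.range r).map fun j => Equiv.swap (x + j) (x + j + 1)).prod z = z + 1 := by
  intro r
  induction r with
  | zero => intro z h1 h2; omega
  | succ r ih =>
    intro z h1 h2
    rw [List.range_succ, List.map_append, List.prod_append]
    simp only [List.map_cons, List.map_nil, List.prod_cons, List.prod_nil, mul_one,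
      Equiv.Perm.mul_apply]
    rcases Nat.lt_or_ge z (x + r) with h | h
    · rw [Equiv.swap_apply_of_ne_of_ne (by omega) (by omega)]
      exact ih z h1 h
    · have hz : z = x + r := by omega
      subst hz
      rw [Equiv.swap_apply_left]
      apply listprod_apply_fixed
      intro p hp
      simp only [List.mem_map, List.mem_range] at hp
      obtain ⟨j, hj, rfl⟩ := hp
      apply Equiv.swap_apply_of_ne_of_ne <;> omega

/-- Pointwise value of a decreasing run `s_{m+c} s_{m-1+c} ⋯ s_{x+c}` (`s_{x+c}` applied first)
at `x + c`: it is sent to `m + c + 1`. -/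
lemma dec_run_apply (c : ℕ) : ∀ s m, 1 ≤ s → s ≤ m →
    ((List.range s).map fun i => Equiv.swap (m - i + c) (m - i + c + 1)).prod (m - s + 1 + c)
      = m + c + 1 := by
  intro s
  induction s with
  | zero => intro m h1 _; omega
  | succ s ih =>
    intro m h1 hm
    rw [List.range_succ, List.map_append, List.prod_append]
    simp only [List.map_cons, List.map_nil, List.prod_cons, List.prod_nil, mul_one,
      Equiv.Perm.mul_apply]
    rcases Nat.eq_zero_or_pos s with rfl | hs
    · simp only [List.range_zero, List.map_nil, List.prod_nil, Equiv.Perm.one_apply]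
      have e1 : m - 1 + 1 + c = m - 0 + c := by omega
      rw [e1, Equiv.swap_apply_left]
      omega
    · have e1 : m - (s + 1) + 1 + c = m - s + c := by omega
      rw [e1, Equiv.swap_apply_left]
      have e2 : m - s + c + 1 = m - s + 1 + c := by omega
      rw [e2]
      exact ih m hs (by omega)



/-- The predicate of `vAt`. -/
def PA (col : ℕ × ℕ → Bool) (x y : ℕ) : ℕ × ℕ → Bool :=
  fun p => col p && decide (x ≤ p.1) && decide (p.2 ≤ y)

lemma vAt_eq (m n : ℕ) (col : ℕ × ℕ → Bool) (x y : ℕ) :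
    vAt m n col x y = readingWord m n (PA col x y) := rfl

lemma PA_true {col : ℕ × ℕ → Bool} {x y : ℕ} {p : ℕ × ℕ} :
    PA col x y p = true ↔ col p = true ∧ x ≤ p.1 ∧ p.2 ≤ y := by
  simp [PA, Bool.and_eq_true, and_assoc]

lemma vAt_apply_low {m n : ℕ} {col : ℕ × ℕ → Bool} {x y z : ℕ} (hz : z < x) :
    vAt m n col x y z = z := by
  rw [vAt_eq]
  apply readingWord_apply_fixed
  intro i j him hjn hP
  rw [PA_true] at hP
  have := hP.2.1
  simp only at this
  omega

lemma vAt_apply_high {m n : ℕ} {col : ℕ × ℕ → Bool} {x y z : ℕ} (hy : m ≤ y) (hz : y < z) :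
    vAt m n col x y z = z := by
  rw [vAt_eq]
  apply readingWord_apply_fixed
  intro i j him hjn hP
  rw [PA_true] at hP
  have := hP.2.2
  simp only at this
  omega

lemma vAt_top {m n : ℕ} {col : ℕ × ℕ → Bool} {x y : ℕ} (hx : m < x) :
    vAt m n col x y = 1 := by
  rw [vAt_eq]
  apply readingWord_eq_one
  intro i j him hjn
  have : ¬ (x ≤ (m - i, m + 1 + j).1) := by simp; omega
  simp [PA, this]

lemma vAt_left {m n : ℕ} {col : ℕ × ℕ → Bool} {x y : ℕ} (hy : y ≤ m) :
    vAt m n col x y = 1 := by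
  rw [vAt_eq]
  apply readingWord_eq_one
  intro i j him hjn
  have : ¬ ((m - i, m + 1 + j).2 ≤ y) := by simp; omega
  simp [PA, this]

lemma vAt_split_bottom {m n : ℕ} {col : ℕ × ℕ → Bool} {x y : ℕ} (hx1 : 1 ≤ x) (hxm : x ≤ m) :
    vAt m n col x y = vAt m n col (x + 1) y * rowW m n (PA col x y) x := by
  rw [vAt_eq, vAt_eq]
  rw [split_bottom (PA col x y) x hx1 hxm]
  · congr 1
    apply readingWord_congr
    intro i j him hjn
    simp only [PA]
    by_cases h2 : x + 1 ≤ m - i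
    · have h3 : x ≤ m - i := by omega
      simp [h2, h3]
    · simp [h2]
  · intro a j ha hj
    have : ¬ (x ≤ (a, m + 1 + j).1) := by simp; omega
    simp [PA, this]

lemma vAt_split_right {m n : ℕ} {col : ℕ × ℕ → Bool} {x c : ℕ} (hc : c < n) :
    vAt m n col x (m + 1 + c) =
      vAt m n col x (m + c) * colW m c (PA col x (m + 1 + c)) := by
  rw [vAt_eq, vAt_eq]
  rw [split_right (PA col x (m + 1 + c)) c hc]
  · congr 1
    apply readingWord_congr
    intro i j him hjn
    simp only [PA]
    by_cases h2 : m + 1 + j ≤ m + c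
    · have h3 : m + 1 + j ≤ m + 1 + c := by omega
      simp [h2, h3]
    · simp [h2]
  · intro a j hj hcj
    have : ¬ ((a, m + 1 + j).2 ≤ m + 1 + c) := by simp; omega
    simp [PA, this]

lemma mkGrid {m n a b : ℕ} (h1 : 1 ≤ a) (h2 : a ≤ m) (h3 : m + 1 ≤ b) (h4 : b ≤ m + n) :
    InGrid m n (a, b) := ⟨h1, h2, h3, h4⟩

lemma grid_bounds {m n a b : ℕ} (h : InGrid m n (a, b)) :
    1 ≤ a ∧ a ≤ m ∧ m + 1 ≤ b ∧ b ≤ m + n := h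

lemma chain_bounds {m n : ℕ} {col : ℕ × ℕ → Bool} {x y t : ℕ} {X Y : ℕ → ℕ}
    (h : IsChainRootedAt m n col x y t X Y) :
    ∀ i, 1 ≤ i → i ≤ t → x ≤ X i ∧ Y i ≤ y := by
  obtain ⟨h1, h2, h3, h4, h5, h6⟩ := h
  intro i
  induction i with
  | zero => omega
  | succ i ih =>
    intro _ hit
    rcases Nat.eq_zero_or_pos i with rfl | hi
    · show x ≤ X 1 ∧ Y 1 ≤ y
      cases hcol : col (x, y) with
      | false =>
        obtain ⟨_, hX, hY⟩ := h2 hcol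
        omega
      | true =>
        obtain ⟨hX, hY, _⟩ := h3 hcol (by omega)
        exact ⟨hX, hY⟩
    · obtain ⟨hs1, hs2, _⟩ := h5 i hi (by omega)
      obtain ⟨hb1, hb2⟩ := ih (by omega) (by omega)
      omega

lemma chainR {m n : ℕ} {col : ℕ × ℕ → Bool} {x y t : ℕ} {X Y : ℕ → ℕ}
    (hx1 : 1 ≤ x) (hxm : x < m) (hy1 : m + 1 ≤ y) (hy2 : y ≤ m + n)
    (hrow : ∀ b', m + 1 ≤ b' → b' ≤ y → col (x, b') = true)
    (h : IsChainRootedAt m n col x y t X Y) :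
    IsChainRootedAt m n col (x + 1) y t X Y := by
  obtain ⟨h1, h2, h3, h4, h5, h6⟩ := h
  have hblack : col (x, y) = true := hrow y hy1 le_rfl
  refine ⟨h1, ?_, ?_, ?_, h5, h6⟩
  · intro hw
    have ht : 1 ≤ t := by
      by_contra ht
      exact h4 (by omega) (x + 1) y (mkGrid (by omega) (by omega) hy1 hy2) hw (by omega) le_rfl
    obtain ⟨hX1, hY1, hmin⟩ := h3 hblack ht
    obtain ⟨ha, hb⟩ := hmin (x + 1) y (mkGrid (by omega) (by omega) hy1 hy2) hw (by omega) le_rfl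
    obtain ⟨hgrid1, hwhite1⟩ := h1 1 le_rfl ht
    have hX1x : X 1 ≠ x := by
      intro hxx
      have hcr := hrow (Y 1) (grid_bounds hgrid1).2.2.1 hY1
      rw [hxx, hcr] at hwhite1
      cases hwhite1
    exact ⟨ht, by omega, by omega⟩
  · intro hb ht
    obtain ⟨hX1, hY1, hmin⟩ := h3 hblack ht
    obtain ⟨hgrid1, hwhite1⟩ := h1 1 le_rfl ht
    have hX1x : X 1 ≠ x := by
      intro hxx
      have hcr := hrow (Y 1) (grid_bounds hgrid1).2.2.1 hY1
      rw [hxx, hcr] at hwhite1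
      cases hwhite1
    exact ⟨by omega, hY1, fun a b hg hwc hax hby => hmin a b hg hwc (by omega) hby⟩
  · intro ht a b hg hwc hax hby
    exact h4 ht a b hg hwc (by omega) hby

lemma chainC {m n : ℕ} {col : ℕ × ℕ → Bool} {x y t : ℕ} {X Y : ℕ → ℕ}
    (hx1 : 1 ≤ x) (hxm : x ≤ m) (hy1 : m + 1 < y) (hy2 : y ≤ m + n)
    (hcol : ∀ a', x ≤ a' → a' ≤ m → col (a', y) = true)
    (h : IsChainRootedAt m n col x y t X Y) :
    IsChainRootedAt m n col x (y - 1) t X Y := by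
  obtain ⟨h1, h2, h3, h4, h5, h6⟩ := h
  have hblack : col (x, y) = true := hcol x le_rfl hxm
  refine ⟨h1, ?_, ?_, ?_, h5, h6⟩
  · intro hw
    have ht : 1 ≤ t := by
      by_contra ht
      exact h4 (by omega) x (y - 1) (mkGrid hx1 hxm (by omega) (by omega)) hw le_rfl (by omega)
    obtain ⟨hX1, hY1, hmin⟩ := h3 hblack ht
    obtain ⟨ha, hb⟩ := hmin x (y - 1) (mkGrid hx1 hxm (by omega) (by omega)) hw le_rfl (by omega)
    obtain ⟨hgrid1, hwhite1⟩ := h1 1 le_rfl ht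
    have hY1y : Y 1 ≠ y := by
      intro hyy
      have hcr := hcol (X 1) hX1 (grid_bounds hgrid1).2.1
      rw [hyy, hcr] at hwhite1
      cases hwhite1
    exact ⟨ht, by omega, by omega⟩
  · intro hb ht
    obtain ⟨hX1, hY1, hmin⟩ := h3 hblack ht
    obtain ⟨hgrid1, hwhite1⟩ := h1 1 le_rfl ht
    have hY1y : Y 1 ≠ y := by
      intro hyy
      have hcr := hcol (X 1) hX1 (grid_bounds hgrid1).2.1
      rw [hyy, hcr] at hwhite1
      cases hwhite1
    exact ⟨hX1, by omega, fun a b hg hwc hax hby => hmin a b hg hwc hax (by omega)⟩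
  · intro ht a b hg hwc hax hby
    exact h4 ht a b hg hwc hax (by omega)

lemma chainW {m n : ℕ} {col : ℕ × ℕ → Bool} {x y t : ℕ} {X Y : ℕ → ℕ}
    (hx1 : 1 ≤ x) (hxm : x < m) (hy1 : m + 1 < y) (hy2 : y ≤ m + n)
    (hw : col (x, y) = false)
    (h : IsChainRootedAt m n col x y t X Y) :
    1 ≤ t ∧ X 1 = x ∧ Y 1 = y ∧
      IsChainRootedAt m n col (x + 1) (y - 1) (t - 1)
        (fun i => X (i + 1)) (fun i => Y (i + 1)) := by
  obtain ⟨h1, h2, h3, h4, h5, h6⟩ := h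
  obtain ⟨ht, hX1, hY1⟩ := h2 hw
  refine ⟨ht, hX1, hY1, ?_, ?_, ?_, ?_, ?_, ?_⟩
  · intro i hi hit
    exact h1 (i + 1) (by omega) (by omega)
  · intro hw'
    have ht2 : 2 ≤ t := by
      rcases Nat.lt_or_ge t 2 with h | h
      · exfalso
        refine h6 ht (x + 1) (y - 1) (mkGrid (by omega) (by omega) (by omega) (by omega)) hw' ?_ ?_
        · have : t = 1 := by omega
          rw [this]; omega
        · have : t = 1 := by omega
          rw [this]; omega
      · exact h
    obtain ⟨hs1, hs2, hmin⟩ := h5 1 le_rfl (by omega)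
    obtain ⟨ha, hb⟩ := hmin (x + 1) (y - 1)
      (mkGrid (by omega) (by omega) (by omega) (by omega)) hw' (by omega) (by omega)
    have e2 : (1 : ℕ) + 1 = 2 := rfl
    rw [e2] at hs1 hs2 ha hb
    refine ⟨by omega, ?_, ?_⟩
    · show X 2 = x + 1
      omega
    · show Y 2 = y - 1
      omega
  · intro hb ht'
    have ht2 : 2 ≤ t := by omega
    obtain ⟨hs1, hs2, hmin⟩ := h5 1 le_rfl (by omega)
    have e2 : (1 : ℕ) + 1 = 2 := rfl
    rw [e2] at hs1 hs2
    refine ⟨?_, ?_, ?_⟩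
    · show x + 1 ≤ X 2
      omega
    · show Y 2 ≤ y - 1
      omega
    · intro a b hg hwc hax hby
      show X (1 + 1) ≤ a ∧ b ≤ Y (1 + 1)
      exact hmin a b hg hwc (by omega) (by omega)
  · intro ht0 a b hg hwc hax hby
    have htt : t = 1 := by omega
    refine h6 ht a b hg hwc ?_ ?_
    · rw [htt]; omega
    · rw [htt]; omega
  · intro i hi hit
    exact h5 (i + 1) (by omega) (by omega)
  · intro ht' a b hg hwc hax hby
    simp only [] at hax hby
    have e : t - 1 + 1 = t := by omega
    rw [e] at hax hby
    exact h6 (by omega) a b hg hwc hax hby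

lemma image_mul (S : Finset ℕ) (A B : Equiv.Perm ℕ) :
    S.image ⇑(A * B) = (S.image ⇑B).image ⇑A := by
  rw [Equiv.Perm.coe_mul, ← Finset.image_image]

lemma Icc_insert_left {a b : ℕ} (h : a ≤ b) :
    Finset.Icc a b = insert a (Finset.Icc (a + 1) b) := by
  ext z
  simp only [Finset.mem_Icc, Finset.mem_insert]
  omega

lemma image_succ_Icc (a b : ℕ) : (Finset.Icc a b).image (· + 1) = Finset.Icc (a + 1) (b + 1) := by
  ext z
  simp only [Finset.mem_image, Finset.mem_Icc]
  constructor
  · rintro ⟨w, hw, rfl⟩; omega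
  · intro hz; exact ⟨z - 1, by omega, by omega⟩

lemma shift_image (f : ℕ → ℕ) (t : ℕ) (ht : 1 ≤ t) :
    (Finset.Icc 1 t).image f =
      insert (f 1) ((Finset.Icc 1 (t - 1)).image fun i => f (i + 1)) := by
  ext z
  simp only [Finset.mem_image, Finset.mem_Icc, Finset.mem_insert]
  constructor
  · rintro ⟨i, hi, rfl⟩
    rcases eq_or_ne i 1 with rfl | hne
    · exact Or.inl rfl
    · exact Or.inr ⟨i - 1, by omega, by rw [show i - 1 + 1 = i by omega]⟩
  · rintro (rfl | ⟨i, hi, rfl⟩)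
    · exact ⟨1, by omega, rfl⟩
    · exact ⟨i + 1, by omega, rfl⟩

lemma sdiff_Icc_erase (B : Finset ℕ) (lo hi : ℕ) :
    Finset.Icc lo (hi + 1) \ insert (hi + 1) B = Finset.Icc lo hi \ B := by
  ext z
  simp only [Finset.mem_sdiff, Finset.mem_Icc, Finset.mem_insert, not_or]
  constructor
  · rintro ⟨h1, h2, h3⟩; exact ⟨by omega, h3⟩
  · rintro ⟨h1, h2⟩; exact ⟨by omega, by omega, h2⟩

lemma sdiff_Icc_insert (B : Finset ℕ) (lo hi : ℕ) (hlo : lo ≤ hi + 1) (hB : hi + 1 ∉ B) :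
    Finset.Icc lo (hi + 1) \ B = insert (hi + 1) (Finset.Icc lo hi \ B) := by
  ext z
  simp only [Finset.mem_sdiff, Finset.mem_Icc, Finset.mem_insert]
  constructor
  · rintro ⟨h1, h2⟩
    rcases eq_or_ne z (hi + 1) with rfl | hne
    · exact Or.inl rfl
    · exact Or.inr ⟨by omega, h2⟩
  · rintro (rfl | ⟨h1, h2⟩)
    · exact ⟨by omega, hB⟩
    · exact ⟨by omega, h2⟩

lemma rowW_full {m n : ℕ} {col : ℕ × ℕ → Bool} {x c : ℕ} (hc : c < n)
    (hrow : ∀ j, j ≤ c → col (x, m + 1 + j) = true) :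
    rowW m n (PA col x (m + 1 + c)) x =
      ((List.range (c + 1)).map fun j => Equiv.swap (x + j) (x + j + 1)).prod := by
  unfold rowW
  rw [trailing_ones _ (c+1) n (by omega) (fun j hj1 hj2 => by
    have : PA col x (m + 1 + c) (x, m + 1 + j) = false := by
      have : ¬ (m + 1 + j ≤ m + 1 + c) := by omega
      simp [PA, this]
    rw [this]; simp)]
  refine congrArg List.prod (List.map_congr_left fun j hj => ?_)
  simp only [List.mem_range] at hj
  rw [if_pos]
  rw [PA_true]
  exact ⟨hrow j (by omega), le_rfl, by simp; omega⟩

lemma colW_full {m : ℕ} {col : ℕ × ℕ → Bool} {x c : ℕ} (hx1 : 1 ≤ x) (hxm : x ≤ m)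
    (hcol : ∀ a, x ≤ a → a ≤ m → col (a, m + 1 + c) = true) :
    colW m c (PA col x (m + 1 + c)) =
      ((List.range (m - x + 1)).map fun i => Equiv.swap (m - i + c) (m - i + c + 1)).prod := by
  unfold colW
  rw [trailing_ones _ (m - x + 1) m (by omega) (fun i hi1 hi2 => by
    have : PA col x (m + 1 + c) (m - i, m + 1 + c) = false := by
      have : ¬ (x ≤ m - i) := by omega
      simp [PA, this]
    rw [this]; simp)]
  refine congrArg List.prod (List.map_congr_left fun i hi => ?_)
  simp only [List.mem_range] at hi
  rw [if_pos]
  rw [PA_true]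
  exact ⟨hcol (m - i) (by omega) (by omega), by simp; omega, le_rfl⟩

lemma colW_full_apply {m : ℕ} {col : ℕ × ℕ → Bool} {x c : ℕ} (hx1 : 1 ≤ x) (hxm : x ≤ m)
    (hcol : ∀ a, x ≤ a → a ≤ m → col (a, m + 1 + c) = true) :
    colW m c (PA col x (m + 1 + c)) (x + c) = m + c + 1 := by
  rw [colW_full hx1 hxm hcol]
  have := dec_run_apply c (m - x + 1) m (by omega) (by omega)
  rwa [show m - (m - x + 1) + 1 = x by omega] at this

lemma colW_fix {m : ℕ} {col : ℕ × ℕ → Bool} {x c z : ℕ} (hz : z < x + c) :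
    colW m c (PA col x (m + 1 + c)) z = z := by
  apply colW_apply_fixed
  intro i hi hP
  rw [PA_true] at hP
  have := hP.2.1
  simp only at this
  constructor <;> omega

lemma mainG {m n : ℕ} {col : ℕ × ℕ → Bool} (hC : IsCauchon m n col) :
    ∀ d x c t X Y, 1 ≤ x → x ≤ m → c < n → m + 1 + c - x ≤ d →
      IsChainRootedAt m n col x (m + 1 + c) t X Y →
      (Finset.Icc x (x + c)).image (vAt m n col x (m + 1 + c)) =
        (Finset.Icc 1 t).image X ∪
          (Finset.Icc (m + 1) (m + 1 + c) \ (Finset.Icc 1 t).image Y) := by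
  intro d
  induction d using Nat.strong_induction_on with
  | _ d ih =>
  intro x c t X Y hx1 hxm hc hd hchain
  by_cases hcolxy : col (x, m + 1 + c) = true
  · -- black corner
    have hgrid : InGrid m n (x, m + 1 + c) := mkGrid hx1 hxm (by omega) (by omega)
    rcases hC x (m + 1 + c) hgrid hcolxy with hrb | hcb
    · -- the whole of row x (up to column m+1+c) is black
      have hrow : ∀ b', m + 1 ≤ b' → b' ≤ m + 1 + c → col (x, b') = true := by
        intro b' h1 h2
        rcases eq_or_lt_of_le h2 with rfl | hlt
        · exact hcolxy
        · exact hrb b' h1 hlt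
      have himg : (Finset.Icc x (x + c)).image (vAt m n col x (m + 1 + c)) =
          (Finset.Icc (x + 1) (x + c + 1)).image (vAt m n col (x + 1) (m + 1 + c)) := by
        rw [vAt_split_bottom hx1 hxm, image_mul]
        congr 1
        rw [rowW_full hc (fun j hj => hrow (m + 1 + j) (by omega) (by omega))]
        rw [Finset.image_congr (g := (· + 1)) (fun z hz => by
          simp only [Finset.coe_Icc, Set.mem_Icc] at hz
          exact inc_run_apply x (c + 1) z hz.1 (by omega))]
        exact image_succ_Icc x (x + c)
      by_cases hxm' : x = m
      · -- top row: the region above is empty, and the chain is empty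
        have ht0 : t = 0 := by
          by_contra ht
          have ht1 : 1 ≤ t := by omega
          obtain ⟨hX1, hY1, _⟩ := hchain.2.2.1 hcolxy ht1
          obtain ⟨hg1, hw1⟩ := hchain.1 1 le_rfl ht1
          have hb := grid_bounds hg1
          have hX1m : X 1 = x := by omega
          have hcr := hrow (Y 1) hb.2.2.1 hY1
          rw [hX1m, hcr] at hw1
          cases hw1
        rw [himg, vAt_top (by omega), ht0]
        have h2 : (Finset.Icc (x + 1) (x + c + 1)).image ⇑(1 : Equiv.Perm ℕ) =
            Finset.Icc (x + 1) (x + c + 1) := by simp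
        have hempty : Finset.Icc 1 0 = ∅ := Finset.Icc_eq_empty (by omega)
        rw [h2, hempty]
        ext z
        simp only [Finset.mem_Icc, Finset.mem_union, Finset.mem_sdiff, Finset.image_empty,
          Finset.notMem_empty, not_false_iff, and_true, false_or]
        omega
      · -- recurse one row up
        have hch' := chainR hx1 (by omega) (by omega) (by omega) hrow hchain
        have := ih (d - 1) (by omega) (x + 1) c t X Y (by omega) (by omega) hc (by omega) hch'
        rw [himg, show x + c + 1 = x + 1 + c by omega]
        exact this
    · -- the whole of column m+1+c (from row x up) is black
      have hcol : ∀ a, x ≤ a → a ≤ m → col (a, m + 1 + c) = true := by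
        intro a h1 h2
        rcases eq_or_lt_of_le h1 with rfl | hlt
        · exact hcolxy
        · exact hcb a hlt h2
      by_cases hc0 : c = 0
      · -- single column region: chain empty, image is {m+1}
        subst hc0
        have ht0 : t = 0 := by
          by_contra ht
          have ht1 : 1 ≤ t := by omega
          obtain ⟨hX1, hY1, _⟩ := hchain.2.2.1 hcolxy ht1
          obtain ⟨hg1, hw1⟩ := hchain.1 1 le_rfl ht1
          have hb := grid_bounds hg1
          have hY1m : Y 1 = m + 1 := by omega
          have := hcol (X 1) hX1 hb.2.1
          rw [hY1m] at hw1
          rw [this] at hw1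
          cases hw1
        have h1 : colW m 0 (PA col x (m + 1 + 0)) x = m + 0 + 1 := by
          have := colW_full_apply (c := 0) hx1 hxm hcol
          simpa using this
        have hval : vAt m n col x (m + 1 + 0) x = m + 1 := by
          rw [vAt_split_right (show (0:ℕ) < n by omega), Equiv.Perm.mul_apply, h1,
            vAt_left (show m + 0 ≤ m by omega)]
          simp
        have hempty : Finset.Icc 1 0 = ∅ := Finset.Icc_eq_empty (by omega)
        rw [ht0, hempty]
        simp only [Nat.add_zero, Finset.Icc_self, Finset.image_singleton, hval]
        ext z
        simp only [Finset.mem_singleton, Finset.mem_union, Finset.mem_sdiff, Finset.mem_Icc,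
          Finset.image_empty, Finset.notMem_empty, not_false_iff, and_true, false_or]
      · -- recurse one column to the left
        have hch' := chainC hx1 hxm (by omega) (by omega) hcol hchain
        rw [show m + 1 + c - 1 = m + 1 + (c - 1) by omega] at hch'
        have hIH := ih (d - 1) (by omega) x (c - 1) t X Y hx1 hxm (by omega) (by omega) hch'
        rw [show m + 1 + (c - 1) = m + c by omega, show x + (c - 1) = x + c - 1 by omega] at hIH
        -- compute the image
        have himg : (Finset.Icc x (x + c)).image (vAt m n col x (m + 1 + c)) =
            insert (m + c + 1) ((Finset.Icc x (x + c - 1)).image (vAt m n col x (m + c))) := by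
          rw [vAt_split_right hc, image_mul]
          have h1 : (Finset.Icc x (x + c)).image (colW m c (PA col x (m + 1 + c))) =
              insert (m + c + 1) (Finset.Icc x (x + c - 1)) := by
            have h0 : Finset.Icc x (x + c) = insert (x + c) (Finset.Icc x (x + c - 1)) := by
              ext z
              simp only [Finset.mem_Icc, Finset.mem_insert]
              omega
            rw [h0, Finset.image_insert, colW_full_apply hx1 hxm hcol]
            congr 1
            have : ∀ z ∈ Finset.Icc x (x + c - 1),
                colW m c (PA col x (m + 1 + c)) z = z := by
              intro z hz
              simp only [Finset.mem_Icc] at hz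
              exact colW_fix (by omega)
            rw [Finset.image_congr (g := id) (fun z hz => this z (by simpa using hz))]
            simp
          rw [h1, Finset.image_insert, vAt_apply_high (by omega) (by omega)]
        rw [himg, hIH]
        -- now rearrange the right-hand side
        have hYb : m + c + 1 ∉ (Finset.Icc 1 t).image Y := by
          simp only [Finset.mem_image, Finset.mem_Icc, not_exists]
          rintro i ⟨⟨hi1, hi2⟩, hYi⟩
          have := (chain_bounds hch' i hi1 hi2).2
          omega
        rw [show m + 1 + c = (m + c) + 1 by omega,
          sdiff_Icc_insert _ _ _ (by omega) hYb, Finset.union_insert]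
  · -- white corner
    have hw : col (x, m + 1 + c) = false := by
      cases h : col (x, m + 1 + c)
      · rfl
      · exact absurd h hcolxy
    obtain ⟨ht, hX1, hY1⟩ := hchain.2.1 hw
    -- the bottom row preserves the interval
    have himg1 : (Finset.Icc x (x + c)).image (vAt m n col x (m + 1 + c)) =
        insert x ((Finset.Icc (x + 1) (x + c)).image (vAt m n col (x + 1) (m + 1 + c))) := by
      rw [vAt_split_bottom hx1 hxm, image_mul]
      have h1 : (Finset.Icc x (x + c)).image (rowW m n (PA col x (m + 1 + c)) x) =
          Finset.Icc x (x + c) := by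
        apply image_perm_self
        apply rowW_mem_Icc
        intro j hj hP
        rw [PA_true] at hP
        have hcj : col (x, m + 1 + j) = true := hP.1
        have hjc : (x, m + 1 + j).2 ≤ m + 1 + c := hP.2.2
        simp only at hjc
        have hjne : j ≠ c := by
          rintro rfl
          rw [hcj] at hw
          cases hw
        constructor <;> omega
      rw [h1, Icc_insert_left (show x ≤ x + c by omega), Finset.image_insert,
        vAt_apply_low (show x < x + 1 by omega)]
    by_cases hxm' : x = m
    · -- top row : the chain is a single square
      have ht1 : t = 1 := by
        by_contra h
        have ht2 : 2 ≤ t := by omega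
        obtain ⟨hs1, _, _⟩ := hchain.2.2.2.2.1 1 le_rfl (by omega)
        have hg2 := (hchain.1 2 (by omega) (by omega)).1
        have hb2 := (grid_bounds hg2).2.1
        have e2 : (1 : ℕ) + 1 = 2 := rfl
        rw [e2] at hs1
        omega
      rw [himg1, vAt_top (by omega), ht1]
      have himgid : (Finset.Icc (x + 1) (x + c)).image ⇑(1 : Equiv.Perm ℕ) =
          Finset.Icc (x + 1) (x + c) := by simp
      rw [himgid]
      simp only [Finset.Icc_self, Finset.image_singleton, hX1, hY1]
      ext z
      simp only [Finset.mem_insert, Finset.mem_Icc, Finset.mem_union, Finset.mem_sdiff,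
        Finset.mem_singleton]
      omega
    · by_cases hc0 : c = 0
      · -- single column : the chain is a single square
        subst hc0
        have ht1 : t = 1 := by
          by_contra h
          have ht2 : 2 ≤ t := by omega
          obtain ⟨_, hs2, _⟩ := hchain.2.2.2.2.1 1 le_rfl (by omega)
          have hg2 := (hchain.1 2 (by omega) (by omega)).1
          have hb2 := (grid_bounds hg2).2.2.1
          have e2 : (1 : ℕ) + 1 = 2 := rfl
          rw [e2] at hs2
          omega
        have hemp : Finset.Icc (x + 1) (x + 0) = ∅ := Finset.Icc_eq_empty (by omega)
        rw [himg1, hemp, ht1]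
        simp only [Finset.image_empty, Finset.Icc_self, Finset.image_singleton, hX1, hY1]
        ext z
        simp only [Finset.mem_insert, Finset.mem_Icc, Finset.mem_union, Finset.mem_sdiff,
          Finset.mem_singleton, Finset.notMem_empty, or_false]
        omega
      · -- recurse to the strictly smaller region
        obtain ⟨_, _, _, hch'⟩ := chainW hx1 (by omega) (by omega) (by omega) hw hchain
        rw [show m + 1 + c - 1 = m + 1 + (c - 1) by omega] at hch'
        have hIH := ih (d - 1) (by omega) (x + 1) (c - 1) (t - 1) _ _
          (by omega) (by omega) (by omega) (by omega) hch'
        rw [show x + 1 + (c - 1) = x + c by omega, show m + 1 + (c - 1) = m + c by omega] at hIH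
        have himg2 : (Finset.Icc (x + 1) (x + c)).image (vAt m n col (x + 1) (m + 1 + c)) =
            (Finset.Icc (x + 1) (x + c)).image (vAt m n col (x + 1) (m + c)) := by
          apply Finset.image_congr
          intro z hz
          simp only [Finset.coe_Icc, Set.mem_Icc] at hz
          rw [vAt_split_right hc, Equiv.Perm.mul_apply,
            colW_fix (show z < (x + 1) + c by omega)]
        rw [himg1, himg2, hIH, shift_image X t ht, shift_image Y t ht, hX1, hY1,
          show m + 1 + c = (m + c) + 1 by omega, sdiff_Icc_erase, Finset.insert_union]


lemma assoc_eq_vAt (m n : ℕ) (col : ℕ × ℕ → Bool) :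
    assocPerm m n col = vAt m n col 1 (m + n) := by
  unfold assocPerm
  rw [vAt_eq]
  apply readingWord_congr
  intro i j him hjn
  have h1 : (1:ℕ) ≤ m - i := by omega
  have h2 : m + 1 + j ≤ m + n := by omega
  simp [PA, h1, h2]

lemma img_lower (m n : ℕ) (col : ℕ × ℕ → Bool) (k x : ℕ)
    (hx1 : 1 ≤ x) (hxm : x ≤ m) (hkx : x + n ≤ k + 1) :
    ∀ e u, 1 ≤ u → u ≤ x → x - u ≤ e →
      (Finset.Icc 1 k).image (vAt m n col u (m + n)) =
        (Finset.Icc 1 k).image (vAt m n col x (m + n)) := by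
  intro e
  induction e with
  | zero =>
    intro u h1 h2 h3
    have : u = x := by omega
    rw [this]
  | succ e ihe =>
    intro u h1 h2 h3
    rcases eq_or_lt_of_le h2 with rfl | hlt
    · rfl
    · have step : (Finset.Icc 1 k).image (vAt m n col u (m + n)) =
          (Finset.Icc 1 k).image (vAt m n col (u + 1) (m + n)) := by
        rw [vAt_split_bottom h1 (by omega), image_mul]
        congr 1
        apply image_perm_self
        apply rowW_mem_Icc
        intro j hj hP
        constructor <;> omega
      rw [step]
      exact ihe (u + 1) (by omega) (by omega) (by omega)

lemma img_split (m n : ℕ) (col : ℕ × ℕ → Bool) (k x : ℕ)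
    (hx1 : 1 ≤ x) (hxk : x ≤ k) :
    (Finset.Icc 1 k).image (vAt m n col x (m + n)) =
      Finset.Icc 1 (x - 1) ∪ (Finset.Icc x k).image (vAt m n col x (m + n)) := by
  have h0 : Finset.Icc 1 k = Finset.Icc 1 (x - 1) ∪ Finset.Icc x k := by
    ext z
    simp only [Finset.mem_Icc, Finset.mem_union]
    omega
  rw [h0, Finset.image_union]
  congr 1
  rw [Finset.image_congr (g := id) (fun z hz => by
    simp only [Finset.coe_Icc, Set.mem_Icc] at hz
    exact vAt_apply_low (by omega))]
  simp

end GNAux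

/-- Let `ω ∈ S_{m+n}` map `i ↦ m+1-i` on `{1,...,m}` and `i ↦ 2m+n+1-i` on `{m+1,...,m+n}`.
Let `col` be an `m × n` Cauchon diagram with associated permutation `v`, let
`k ∈ {n+1,...,m+n-1}`, and let `(X 1, Y 1),...,(X t, Y t)` be the chain rooted at box `k` on
the south-east border.  Then `({1,...,m} \ {m+1-X i}) ∪ {2m+n+1-Y i} =
({1,...,m+n} \ (ω ∘ v)({1,...,k})) ∪ {m+n-k+1,...,m}`. -/
theorem grassmannNecklace_term_high
    (m n : ℕ) (hm : 2 ≤ m) (hn : 2 ≤ n)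
    (ω : Equiv.Perm ℕ)
    (hω1 : ∀ i, 1 ≤ i → i ≤ m → ω i = m + 1 - i)
    (hω2 : ∀ i, m + 1 ≤ i → i ≤ m + n → ω i = 2 * m + n + 1 - i)
    (hω3 : ∀ i, i = 0 ∨ m + n < i → ω i = i)
    (col : ℕ × ℕ → Bool) (hC : IsCauchon m n col)
    (k : ℕ) (hk1 : n + 1 ≤ k) (hkn : k ≤ m + n - 1)
    (t : ℕ) (X Y : ℕ → ℕ)
    (hchain : IsChainRootedAt m n col (boxSE m n k).1 (boxSE m n k).2 t X Y) :
    (Finset.Icc 1 m \ Finset.image (fun i => m + 1 - X i) (Finset.Icc 1 t)) ∪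
        Finset.image (fun i => 2 * m + n + 1 - Y i) (Finset.Icc 1 t) =
      (Finset.Icc 1 (m + n) \
        Finset.image (fun j => ω (assocPerm m n col j)) (Finset.Icc 1 k)) ∪
        Finset.Icc (m + n - k + 1) m := by
  classical
  set x := k - n + 1 with hxdef
  have hx2 : 2 ≤ x := by omega
  have hxm : x ≤ m := by omega
  have hbox : boxSE m n k = (x, m + n) := by
    unfold boxSE
    rw [if_neg (by omega)]
  rw [hbox] at hchain
  simp only at hchain
  -- chain member bounds
  have hmem : ∀ i, 1 ≤ i → i ≤ t →
      1 ≤ X i ∧ X i ≤ m ∧ m + 1 ≤ Y i ∧ Y i ≤ m + n ∧ x ≤ X i := by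
    intro i h1 h2
    have hg := GNAux.grid_bounds (hchain.1 i h1 h2).1
    have hb := GNAux.chain_bounds hchain i h1 h2
    exact ⟨hg.1, hg.2.1, hg.2.2.1, hg.2.2.2, hb.1⟩
  -- the main identity
  have hmn : m + n = m + 1 + (n - 1) := by omega
  have hchain' := hchain
  rw [hmn] at hchain'
  have hmain := GNAux.mainG hC (m + 1 + (n - 1) - x) x (n - 1) t X Y
    (by omega) hxm (by omega) le_rfl hchain'
  rw [show x + (n - 1) = k by omega, show m + 1 + (n - 1) = m + n by omega] at hmain
  -- the image of Icc 1 k under the associated permutation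
  have himg : (Finset.Icc 1 k).image (assocPerm m n col) =
      Finset.Icc 1 (x - 1) ∪
        ((Finset.Icc 1 t).image X ∪
          (Finset.Icc (m + 1) (m + n) \ (Finset.Icc 1 t).image Y)) := by
    rw [GNAux.assoc_eq_vAt m n col,
      GNAux.img_lower m n col k x (by omega) hxm (by omega) (x - 1) 1 le_rfl (by omega) (by omega),
      GNAux.img_split m n col k x (by omega) (by omega), hmain]
  -- apply ω to everything
  have hωimg : (Finset.Icc 1 k).image (fun j => ω (assocPerm m n col j)) =
      Finset.Icc (m + n - k + 1) m ∪
        ((Finset.Icc 1 t).image (fun i => m + 1 - X i) ∪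
          (Finset.Icc (m + 1) (m + n) \
            (Finset.Icc 1 t).image (fun i => 2 * m + n + 1 - Y i))) := by
    have e0 : (Finset.Icc 1 k).image (fun j => ω (assocPerm m n col j)) =
        ((Finset.Icc 1 k).image (assocPerm m n col)).image ω := by
      rw [Finset.image_image]
      rfl
    rw [e0, himg, Finset.image_union, Finset.image_union]
    congr 1
    · -- ω (Icc 1 (x-1)) = Icc (m+n-k+1) m
      rw [Finset.image_congr (g := fun i => m + 1 - i) (fun z hz => by
        simp only [Finset.coe_Icc, Set.mem_Icc] at hz
        exact hω1 z hz.1 (by omega))]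
      ext z
      simp only [Finset.mem_image, Finset.mem_Icc]
      constructor
      · rintro ⟨w, hw, rfl⟩; omega
      · intro hz; exact ⟨m + 1 - z, by omega, by omega⟩
    congr 1
    · -- ω on the X image
      rw [Finset.image_image]
      apply Finset.image_congr
      intro i hi
      simp only [Finset.coe_Icc, Set.mem_Icc] at hi
      have := hmem i hi.1 hi.2
      show ω (X i) = m + 1 - X i
      exact hω1 (X i) (by omega) (by omega)
    · -- ω on the complement part
      rw [Finset.image_sdiff _ _ ω.injective]
      congr 1
      · rw [Finset.image_congr (g := fun i => 2 * m + n + 1 - i) (fun z hz => by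
          simp only [Finset.coe_Icc, Set.mem_Icc] at hz
          exact hω2 z hz.1 hz.2)]
        ext z
        simp only [Finset.mem_image, Finset.mem_Icc]
        constructor
        · rintro ⟨w, hw, rfl⟩; omega
        · intro hz; exact ⟨2 * m + n + 1 - z, by omega, by omega⟩
      · rw [Finset.image_image]
        apply Finset.image_congr
        intro i hi
        simp only [Finset.coe_Icc, Set.mem_Icc] at hi
        have := hmem i hi.1 hi.2
        show ω (Y i) = 2 * m + n + 1 - Y i
        exact hω2 (Y i) (by omega) (by omega)
  rw [hωimg]
  -- final set-theoretic bookkeeping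
  ext z
  simp only [Finset.mem_union, Finset.mem_sdiff, Finset.mem_Icc, Finset.mem_image, not_or]
  have hPb : (∃ i, (1 ≤ i ∧ i ≤ t) ∧ m + 1 - X i = z) → 1 ≤ z ∧ z + k ≤ m + n := by
    rintro ⟨i, ⟨hi1, hi2⟩, rfl⟩
    have := hmem i hi1 hi2
    omega
  have hQb : (∃ i, (1 ≤ i ∧ i ≤ t) ∧ 2 * m + n + 1 - Y i = z) → m + 1 ≤ z ∧ z ≤ m + n := by
    rintro ⟨i, ⟨hi1, hi2⟩, rfl⟩
    have := hmem i hi1 hi2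
    omega
  constructor
  · rintro (⟨⟨hz1, hz2⟩, hnP⟩ | hQ)
    · by_cases hI : m + n - k + 1 ≤ z ∧ z ≤ m
      · right; exact hI
      · left
        refine ⟨⟨hz1, by omega⟩, by omega, hnP, ?_⟩
        rintro ⟨⟨h1, _⟩, _⟩
        omega
    · have hb := hQb hQ
      by_cases hI : m + n - k + 1 ≤ z ∧ z ≤ m
      · right; exact hI
      · left
        refine ⟨⟨by omega, hb.2⟩, by omega, ?_, ?_⟩
        · intro hP
          have := hPb hP
          omega
        · rintro ⟨_, hnQ⟩
          exact hnQ hQ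
  · rintro (⟨⟨hz1, hz2⟩, hn1, hn2, hn3⟩ | hI)
    · by_cases hzm : z ≤ m
      · left; exact ⟨⟨hz1, hzm⟩, hn2⟩
      · right
        by_cases hQ' : ∃ i, (1 ≤ i ∧ i ≤ t) ∧ 2 * m + n + 1 - Y i = z
        · exact hQ'
        · exact absurd ⟨⟨by omega, hz2⟩, hQ'⟩ hn3
    · left
      refine ⟨⟨by omega, hI.2⟩, fun hP => ?_⟩
      have := hPb hP
      omega
end

section
/- Let m, n ≥ 1 and let B be a real m×n matrix. Define θ(B) to be the real m×(m+n) matrix whose first m columns form the m×m identity matrix and whose (m+j)-th column, for j ∈ {1,...,n}, has i-th entry (-1)^{m-i} · B_{i, n+1-j}. Then for all subsets S ⊆ {1,...,m} and T ⊆ {1,...,n} with |S| = |T|, the minor of B with row set S and column set T (the determinant of the submatrix of B on rows S and columns T, each taken in increasing order) equals the maximal minor Δ_I(θ(B)), where I = ({1,...,m} \ S) ∪ {m+n+1-t : t ∈ T} and Δ_I(θ(B)) denotes the determinant of the m×m submatrix of θ(B) whose columns are indexed by I taken in increasing order. -/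
open Finset

/-- The minor of `M` with row set `R` and column set `C` (rows and columns each taken in
increasing order); defined to be `0` if the cardinalities do not match. -/
noncomputable def minorN (M : ℕ → ℕ → ℝ) (R C : Finset ℕ) : ℝ :=
  if h : C.card = R.card then
    Matrix.det (Matrix.of fun i j : Fin R.card =>
      M ((R.orderIsoOfFin rfl) i).1 ((C.orderIsoOfFin h) j).1)
  else 0

/-- The matrix `θ(B)`: its first `m` columns form the `m × m` identity matrix, and for
`j ∈ {1,...,n}` the `(m+j)`-th column has `i`-th entry `(-1)^(m-i) * B i (n+1-j)`. -/
noncomputable def theta (m n : ℕ) (B : ℕ → ℕ → ℝ) : ℕ → ℕ → ℝ := fun i c =>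
  if c ≤ m then (if i = c then 1 else 0)
  else (-1 : ℝ) ^ (m - i) * B i (n + 1 - (c - m))

lemma minorN_eq' (M : ℕ → ℕ → ℝ) {R C : Finset ℕ} {k : ℕ} (hR : R.card = k) (hC : C.card = k) :
    minorN M R C = (Matrix.of fun i j : Fin k =>
      M (R.orderEmbOfFin hR i) (C.orderEmbOfFin hC j)).det := by
  subst hR
  rw [minorN, dif_pos hC]
  rfl

lemma neg_one_pow_congr' {a b : ℕ} (h : a % 2 = b % 2) : (-1 : ℝ) ^ a = (-1) ^ b := by
  rw [neg_one_pow_eq_pow_mod_two, h, ← neg_one_pow_eq_pow_mod_two]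

lemma orderEmbOfFin_image {s : Finset ℕ} {k : ℕ} (h : s.card = k) (f : ℕ → ℕ)
    (hf : ∀ a ∈ s, ∀ b ∈ s, a < b → f a < f b) (h' : (s.image f).card = k) (j : Fin k) :
    (s.image f).orderEmbOfFin h' j = f (s.orderEmbOfFin h j) := by
  have : (fun j : Fin k => f (s.orderEmbOfFin h j)) = (s.image f).orderEmbOfFin h' := by
    apply Finset.orderEmbOfFin_unique h'
    · exact fun j => Finset.mem_image_of_mem f (Finset.orderEmbOfFin_mem s h j)
    · intro a b hab
      exact hf _ (Finset.orderEmbOfFin_mem s h a) _ (Finset.orderEmbOfFin_mem s h b)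
        ((s.orderEmbOfFin h).strictMono hab)
  exact (congrFun this j).symm

lemma orderEmbOfFin_image_anti {s : Finset ℕ} {k : ℕ} (h : s.card = k) (f : ℕ → ℕ)
    (hf : ∀ a ∈ s, ∀ b ∈ s, a < b → f b < f a) (h' : (s.image f).card = k) (j : Fin k) :
    (s.image f).orderEmbOfFin h' j = f (s.orderEmbOfFin h j.rev) := by
  have : (fun j : Fin k => f (s.orderEmbOfFin h j.rev)) = (s.image f).orderEmbOfFin h' := by
    apply Finset.orderEmbOfFin_unique h'
    · exact fun j => Finset.mem_image_of_mem f (Finset.orderEmbOfFin_mem s h _)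
    · intro a b hab
      exact hf _ (Finset.orderEmbOfFin_mem s h _) _ (Finset.orderEmbOfFin_mem s h _)
        ((s.orderEmbOfFin h).strictMono (Fin.rev_lt_rev.2 hab))
  exact (congrFun this j).symm

lemma orderEmbOfFin_erase {s : Finset ℕ} {k : ℕ} (h : s.card = k + 1) (p : Fin (k + 1))
    (h' : (s.erase (s.orderEmbOfFin h p)).card = k) (j : Fin k) :
    (s.erase (s.orderEmbOfFin h p)).orderEmbOfFin h' j = s.orderEmbOfFin h (p.succAbove j) := by
  have : (fun j : Fin k => s.orderEmbOfFin h (p.succAbove j))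
      = (s.erase (s.orderEmbOfFin h p)).orderEmbOfFin h' := by
    apply Finset.orderEmbOfFin_unique h'
    · intro j
      refine Finset.mem_erase.2 ⟨?_, Finset.orderEmbOfFin_mem s h _⟩
      exact fun hc => Fin.succAbove_ne p j ((s.orderEmbOfFin h).injective hc)
    · exact (s.orderEmbOfFin h).strictMono.comp (Fin.strictMono_succAbove p)
  exact (congrFun this j).symm

lemma orderEmbOfFin_Icc {M k : ℕ} (h : (Finset.Icc 1 M).card = k) (i : Fin k) :
    (Finset.Icc 1 M).orderEmbOfFin h i = (i : ℕ) + 1 := by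
  have hk : k = M := by rw [Nat.card_Icc] at h; omega
  have : (fun i : Fin k => (i : ℕ) + 1) = (Finset.Icc 1 M).orderEmbOfFin h := by
    apply Finset.orderEmbOfFin_unique h
    · intro i
      have := i.2
      exact Finset.mem_Icc.2 ⟨by omega, by omega⟩
    · intro a b hab
      simpa using hab
  exact (congrFun this i).symm

lemma orderEmbOfFin_zero_min {s : Finset ℕ} {k : ℕ} (h : s.card = k + 1) (h1 : 1 ∈ s)
    (hall : ∀ x ∈ s, 1 ≤ x) : s.orderEmbOfFin h (0 : Fin (k + 1)) = 1 := by
  have h0 : (0 : Fin (k+1)) = ⟨0, k.succ_pos⟩ := rfl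
  rw [h0, Finset.orderEmbOfFin_zero h k.succ_pos]
  exact le_antisymm (Finset.min'_le s 1 h1) (Finset.le_min' _ _ _ hall)

lemma orderEmbOfFin_union {A B : Finset ℕ} {a b c : ℕ} (hA : A.card = a) (hB : B.card = b)
    (hlt : ∀ x ∈ A, ∀ y ∈ B, x < y) (hc : a + b = c) (h : (A ∪ B).card = c) (j : Fin c) :
    (A ∪ B).orderEmbOfFin h j =
      if hj : (j : ℕ) < a then A.orderEmbOfFin hA ⟨j, hj⟩
      else B.orderEmbOfFin hB ⟨(j : ℕ) - a, by omega⟩ := by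
  have : (fun j : Fin c =>
      if hj : (j : ℕ) < a then A.orderEmbOfFin hA ⟨j, hj⟩
      else B.orderEmbOfFin hB ⟨(j : ℕ) - a, by omega⟩) = (A ∪ B).orderEmbOfFin h := by
    apply Finset.orderEmbOfFin_unique h
    · intro j
      by_cases hj : (j : ℕ) < a
      · simp only [dif_pos hj]
        exact Finset.mem_union_left _ (Finset.orderEmbOfFin_mem _ _ _)
      · simp only [dif_neg hj]
        exact Finset.mem_union_right _ (Finset.orderEmbOfFin_mem _ _ _)
    · intro x y hxy
      by_cases hx : (x : ℕ) < a <;> by_cases hy : (y : ℕ) < a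
      · simp only [dif_pos hx, dif_pos hy]
        exact (A.orderEmbOfFin hA).strictMono (by exact hxy)
      · simp only [dif_pos hx, dif_neg hy]
        exact hlt _ (Finset.orderEmbOfFin_mem _ _ _) _ (Finset.orderEmbOfFin_mem _ _ _)
      · exact absurd (show (x : ℕ) < (y : ℕ) from hxy) (by omega)
      · simp only [dif_neg hx, dif_neg hy]
        refine (B.orderEmbOfFin hB).strictMono ?_
        have : (x : ℕ) < (y : ℕ) := hxy
        exact Fin.mk_lt_mk.2 (by omega)
  exact (congrFun this j).symm

lemma theta_shift (m n : ℕ) (B : ℕ → ℕ → ℝ) (i c : ℕ) :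
    theta m n (fun i j => B (i + 1) j) (i + 1) c = theta (m + 1) n B (i + 2) (c + 1) := by
  unfold theta
  by_cases hc : c ≤ m
  · rw [if_pos hc, if_pos (show c + 1 ≤ m + 1 from by omega)]
    by_cases hi : i + 1 = c
    · rw [if_pos hi, if_pos (show i + 2 = c + 1 from by omega)]
    · rw [if_neg hi, if_neg (show ¬ (i + 2 = c + 1) from by omega)]
  · rw [if_neg hc, if_neg (show ¬ (c + 1 ≤ m + 1) from by omega),
      show m + 1 - (i + 2) = m - (i + 1) from by omega,
      show c + 1 - (m + 1) = c - m from by omega]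

lemma minorN_shift (M : ℕ → ℕ → ℝ) {R C : Finset ℕ} (h1 : ∀ x ∈ R, 1 ≤ x)
    (hcard : C.card = R.card) :
    minorN M R C = minorN (fun i j => M (i + 1) j) (R.image (fun x => x - 1)) C := by
  have hinj : Set.InjOn (fun x => x - 1) R := by
    intro x hx y hy hxy
    have := h1 x hx
    have := h1 y hy
    simp only at hxy
    omega
  have hc2 : (R.image (fun x => x - 1)).card = R.card := Finset.card_image_of_injOn hinj
  rw [minorN_eq' M rfl hcard, minorN_eq' _ hc2 hcard]
  congr 1
  funext i j
  simp only [Matrix.of_apply]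
  rw [orderEmbOfFin_image (f := fun x => x - 1) rfl
    (fun x hx y hy hxy => by have := h1 x hx; have := h1 y hy; omega) hc2]
  have := h1 _ (Finset.orderEmbOfFin_mem R rfl i)
  congr 1
  omega

lemma card_I {m n k : ℕ} {S T : Finset ℕ} (hS : S ⊆ Finset.Icc 1 m) (hT : T ⊆ Finset.Icc 1 n)
    (hSc : S.card = k) (hTc : T.card = k) :
    ((Finset.Icc 1 m \ S) ∪ T.image (fun t => m + n + 1 - t)).card = m := by
  have hmIcc : (Finset.Icc 1 m).card = m := by rw [Nat.card_Icc]; omega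
  have hk : k ≤ m := by
    have := Finset.card_le_card hS
    omega
  have hsd : (Finset.Icc 1 m \ S).card = m - k := by
    rw [Finset.card_sdiff_of_subset hS, hmIcc, hSc]
  have him : (T.image (fun t => m + n + 1 - t)).card = k := by
    rw [Finset.card_image_of_injOn, hTc]
    intro x hx y hy hxy
    have hx' := Finset.mem_Icc.1 (hT hx)
    have hy' := Finset.mem_Icc.1 (hT hy)
    dsimp only at hxy
    omega
  have hdisj : Disjoint (Finset.Icc 1 m \ S) (T.image (fun t => m + n + 1 - t)) := by
    rw [Finset.disjoint_left]
    intro x hx hx2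
    have h1 : x ≤ m := (Finset.mem_Icc.1 (Finset.mem_sdiff.1 hx).1).2
    obtain ⟨t, ht, rfl⟩ := Finset.mem_image.1 hx2
    have := Finset.mem_Icc.1 (hT ht)
    omega
  rw [Finset.card_union_of_disjoint hdisj, hsd, him]
  omega

lemma sum_shift_reindex {k r : ℕ} (F : Fin (r + k + 1) → ℝ)
    (h0 : ∀ j : Fin (r + k + 1), (j : ℕ) < r → F j = 0) :
    ∑ j, F j = ∑ j' : Fin (k + 1), F ⟨r + (k - (j' : ℕ)), by omega⟩ := by
  classical
  have hinj : ∀ a ∈ Finset.univ, ∀ b ∈ Finset.univ,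
      (fun j' : Fin (k + 1) => (⟨r + (k - (j' : ℕ)), by omega⟩ : Fin (r + k + 1))) a =
      (fun j' : Fin (k + 1) => (⟨r + (k - (j' : ℕ)), by omega⟩ : Fin (r + k + 1))) b →
      a = b := by
    intro a _ b _ hab
    have ha := a.2; have hb := b.2
    have h2 : r + (k - (a : ℕ)) = r + (k - (b : ℕ)) := congrArg Fin.val hab
    exact Fin.ext (by omega)
  have hsub := Finset.sum_subset
    (Finset.subset_univ (Finset.univ.image
      (fun j' : Fin (k + 1) => (⟨r + (k - (j' : ℕ)), by omega⟩ : Fin (r + k + 1)))))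
    (f := F)
    (by
      intro j _ hj
      apply h0
      by_contra hge
      push_neg at hge
      have hj2 := j.isLt
      refine hj (Finset.mem_image.2 ⟨⟨k - ((j : ℕ) - r), by omega⟩, Finset.mem_univ _, ?_⟩)
      exact Fin.ext (show r + (k - (k - ((j : ℕ) - r))) = (j : ℕ) by omega))
  rw [← hsub, Finset.sum_image hinj]

set_option maxHeartbeats 2000000 in
theorem aux_main : ∀ (m : ℕ) (n : ℕ) (B : ℕ → ℕ → ℝ) (S T : Finset ℕ),
    S ⊆ Finset.Icc 1 m → T ⊆ Finset.Icc 1 n → S.card = T.card →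
    minorN B S T = minorN (theta m n B) (Finset.Icc 1 m)
      ((Finset.Icc 1 m \ S) ∪ T.image fun t => m + n + 1 - t) := by
  intro m
  induction m with
  | zero =>
    intro n B S T hS hT hST
    have hS0 : S = ∅ := Finset.subset_empty.1 (by simpa using hS)
    have hT0 : T = ∅ := Finset.card_eq_zero.1 (by rw [← hST, hS0, Finset.card_empty])
    subst hS0; subst hT0
    rw [minorN_eq' B Finset.card_empty Finset.card_empty, Matrix.det_fin_zero,
      minorN_eq' _ (show (Finset.Icc 1 0).card = 0 by rw [Nat.card_Icc])
        (show ((Finset.Icc 1 0 \ ∅) ∪ (∅ : Finset ℕ).image fun t => 0 + n + 1 - t).card = 0 by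
          simp [Nat.card_Icc]),
      Matrix.det_fin_zero]
  | succ m ih =>
    intro n B S T hS hT hST
    have hTmem : ∀ t ∈ T, 1 ≤ t ∧ t ≤ n := fun t ht => Finset.mem_Icc.1 (hT ht)
    have hSmem : ∀ s ∈ S, 1 ≤ s ∧ s ≤ m + 1 := fun s hs => Finset.mem_Icc.1 (hS hs)
    have hIccCard : (Finset.Icc 1 (m+1)).card = m + 1 := by rw [Nat.card_Icc]; omega
    have hkm : S.card ≤ m + 1 := by
      have := Finset.card_le_card hS
      omega
    have hIcard : ((Finset.Icc 1 (m+1) \ S) ∪ T.image fun t => m + 1 + n + 1 - t).card = m + 1 :=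
      card_I hS hT rfl hST.symm
    have hImem : ∀ x ∈ (Finset.Icc 1 (m+1) \ S) ∪ T.image fun t => m + 1 + n + 1 - t, 1 ≤ x := by
      intro x hx
      rcases Finset.mem_union.1 hx with hx | hx
      · exact (Finset.mem_Icc.1 (Finset.mem_sdiff.1 hx).1).1
      · obtain ⟨t, ht, rfl⟩ := Finset.mem_image.1 hx
        have := hTmem t ht
        omega
    have hIccm : (Finset.Icc 1 m).card = m := by rw [Nat.card_Icc]; omega
    by_cases h1 : 1 ∈ S
    · -- case 1 ∈ S
      obtain ⟨k, hk⟩ : ∃ k, S.card = k + 1 :=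
        ⟨S.card - 1, by have : 0 < S.card := Finset.card_pos.2 ⟨1, h1⟩; omega⟩
      have hTcard : T.card = k + 1 := by omega
      set r := m + 1 - S.card with hr
      have hrk : r + (k + 1) = m + 1 := by omega
      have hIccR : (Finset.Icc 1 (m+1)).card = r + k + 1 := by omega
      have hIcardR : ((Finset.Icc 1 (m+1) \ S) ∪ T.image fun t => m + 1 + n + 1 - t).card
          = r + k + 1 := by omega
      have hCoCard : (Finset.Icc 1 (m+1) \ S).card = r := by
        rw [Finset.card_sdiff_of_subset hS, hIccCard]
      have hImCard : (T.image fun t => m + 1 + n + 1 - t).card = k + 1 := by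
        rw [Finset.card_image_of_injOn, hTcard]
        intro x hx y hy hxy
        have hxy' : m + 1 + n + 1 - x = m + 1 + n + 1 - y := hxy
        have := hTmem x hx; have := hTmem y hy; omega
      have hembS0 : S.orderEmbOfFin hk 0 = 1 :=
        orderEmbOfFin_zero_min hk h1 (fun x hx => (hSmem x hx).1)
      have hunion := orderEmbOfFin_union hCoCard hImCard
        (by
          intro x hx y hy
          have hx' := (Finset.mem_Icc.1 (Finset.mem_sdiff.1 hx).1).2
          obtain ⟨t, ht, hfy⟩ := Finset.mem_image.1 hy
          have hfy' : m + 1 + n + 1 - t = y := hfy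
          have := hTmem t ht
          omega) (by omega) hIcardR
      have hembIm : ∀ jj : Fin (k+1), ((T.image fun t => m + 1 + n + 1 - t).orderEmbOfFin hImCard) jj
          = m + 1 + n + 1 - T.orderEmbOfFin hTcard jj.rev :=
        orderEmbOfFin_image_anti hTcard _
          (fun a ha b hb hab => by have := hTmem a ha; have := hTmem b hb; omega) hImCard
      have hembIval : ∀ j' : Fin (k+1),
          ((Finset.Icc 1 (m+1) \ S) ∪ T.image fun t => m + 1 + n + 1 - t).orderEmbOfFin hIcardR
            ⟨r + (k - (j' : ℕ)), by omega⟩ = m + 1 + n + 1 - T.orderEmbOfFin hTcard j' := by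
        intro j'
        rw [hunion ⟨r + (k - (j' : ℕ)), by omega⟩]
        rw [dif_neg (show ¬ (r + (k - (j' : ℕ)) < r) by omega)]
        have hidx : (⟨(r + (k - (j' : ℕ))) - r, by omega⟩ : Fin (k+1))
            = ⟨k - (j' : ℕ), by omega⟩ :=
          Fin.ext (show r + (k - (j' : ℕ)) - r = k - (j' : ℕ) by omega)
        rw [hidx, hembIm]
        have hj' := j'.isLt
        have hrev : (⟨k - (j' : ℕ), by omega⟩ : Fin (k+1)).rev = j' := by
          apply Fin.ext
          rw [Fin.val_rev]
          show k + 1 - (k - (j' : ℕ) + 1) = (j' : ℕ)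
          omega
        rw [hrev]
      rw [minorN_eq' B hk hTcard, minorN_eq' (theta (m+1) n B) hIccR hIcardR]
      set L := Matrix.of (fun i j : Fin (k+1) =>
        B (S.orderEmbOfFin hk i) (T.orderEmbOfFin hTcard j)) with hL
      set A := Matrix.of (fun i j : Fin (r+k+1) =>
        theta (m+1) n B ((Finset.Icc 1 (m+1)).orderEmbOfFin hIccR i)
          (((Finset.Icc 1 (m+1) \ S) ∪ T.image fun t => m + 1 + n + 1 - t).orderEmbOfFin
            hIcardR j)) with hA
      rw [Matrix.det_succ_row_zero L, Matrix.det_succ_row_zero A]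
      have h0 : ∀ j : Fin (r + k + 1), (j : ℕ) < r →
          (-1:ℝ)^(j:ℕ) * A 0 j * (A.submatrix Fin.succ j.succAbove).det = 0 := by
        intro j hj
        have hA0 : A 0 j = 0 := by
          rw [hA]
          simp only [Matrix.of_apply]
          rw [orderEmbOfFin_Icc, hunion j, dif_pos hj]
          have hmem := Finset.orderEmbOfFin_mem _ hCoCard ⟨(j:ℕ), hj⟩
          have hmem2 := Finset.mem_sdiff.1 hmem
          have hx := Finset.mem_Icc.1 hmem2.1
          unfold theta
          rw [if_pos hx.2, if_neg ?_]
          intro hc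
          have hc' : (Finset.Icc 1 (m+1) \ S).orderEmbOfFin hCoCard ⟨(j:ℕ), hj⟩ = 1 := by
            have : ((0 : Fin (r+k+1)) : ℕ) = 0 := rfl
            omega
          apply hmem2.2
          rw [hc']
          exact h1
        rw [hA0]
        ring
      refine Eq.trans (Finset.sum_congr rfl fun j' _ => ?_) (sum_shift_reindex _ h0).symm
      show (-1:ℝ)^((j' : ℕ)) * L 0 j' * (L.submatrix Fin.succ j'.succAbove).det
        = (-1:ℝ)^(((⟨r + (k - (j' : ℕ)), by omega⟩ : Fin (r+k+1)) : ℕ))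
          * A 0 ⟨r + (k - (j' : ℕ)), by omega⟩
          * ((A.submatrix Fin.succ
              (⟨r + (k - (j' : ℕ)), by omega⟩ : Fin (r+k+1)).succAbove).det)
      have hj'lt := j'.isLt
      have ht := hTmem _ (Finset.orderEmbOfFin_mem T hTcard j')
      -- value of A at the top row
      have hAtop : A 0 ⟨r + (k - (j' : ℕ)), by omega⟩
          = (-1:ℝ)^m * B 1 (T.orderEmbOfFin hTcard j') := by
        rw [hA]
        simp only [Matrix.of_apply]
        rw [orderEmbOfFin_Icc, hembIval j']
        unfold theta
        rw [if_neg (show ¬ (m + 1 + n + 1 - T.orderEmbOfFin hTcard j' ≤ m + 1) by omega)]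
        rw [show ((0 : Fin (r+k+1)) : ℕ) + 1 = 1 from rfl]
        rw [show m + 1 - 1 = m by omega]
        rw [show n + 1 - (m + 1 + n + 1 - T.orderEmbOfFin hTcard j' - (m + 1))
            = T.orderEmbOfFin hTcard j' by omega]
      have hLtop : L 0 j' = B 1 (T.orderEmbOfFin hTcard j') := by
        rw [hL]
        simp only [Matrix.of_apply]
        rw [hembS0]
      -- the determinant identity
      have hSe : (S.erase 1).card = k := by
        rw [Finset.card_erase_of_mem h1, hk]; omega
      have hTe : (T.erase (T.orderEmbOfFin hTcard j')).card = k := by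
        rw [Finset.card_erase_of_mem (Finset.orderEmbOfFin_mem T hTcard j'), hTcard]; omega
      have hSemem : ∀ x ∈ S.erase 1, 2 ≤ x := by
        intro x hx
        have h2 := Finset.mem_erase.1 hx
        have := hSmem x h2.2
        omega
      have hS''sub : (S.erase 1).image (fun x => x - 1) ⊆ Finset.Icc 1 m := by
        intro x hx
        obtain ⟨s, hs, rfl⟩ := Finset.mem_image.1 hx
        have h2 := hSemem s hs
        have h3 := hSmem s (Finset.mem_of_mem_erase hs)
        exact Finset.mem_Icc.2 ⟨by omega, by omega⟩
      have hS''card : ((S.erase 1).image (fun x => x - 1)).card = k := by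
        rw [Finset.card_image_of_injOn, hSe]
        intro x hx y hy hxy
        have hxy' : x - 1 = y - 1 := hxy
        have := hSemem x hx; have := hSemem y hy; omega
      have hTesub : T.erase (T.orderEmbOfFin hTcard j') ⊆ Finset.Icc 1 n :=
        (Finset.erase_subset _ _).trans hT
      have hIccmR : (Finset.Icc 1 m).card = r + k := by
        rw [Nat.card_Icc]; omega
      have hIsubm := card_I hS''sub hTesub hS''card hTe
      have hIsubR : ((Finset.Icc 1 m \ (S.erase 1).image (fun x => x - 1)) ∪
          (T.erase (T.orderEmbOfFin hTcard j')).image fun u => m + n + 1 - u).card = r + k := by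
        omega
      -- step A : L submatrix = minor matrix of (S.erase 1, T.erase t)
      have hLsub : (L.submatrix Fin.succ j'.succAbove).det
          = minorN B (S.erase 1) (T.erase (T.orderEmbOfFin hTcard j')) := by
        rw [minorN_eq' B hSe hTe]
        congr 1
        ext i j
        simp only [hL, Matrix.submatrix_apply, Matrix.of_apply]
        have hrow := orderEmbOfFin_erase hk 0 (by rw [hembS0]; exact hSe) i
        simp only [hembS0, Fin.succAbove_zero] at hrow
        have hcol := orderEmbOfFin_erase hTcard j' (by exact hTe) j
        rw [hrow, hcol]
      -- step B : shift + induction hypothesis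
      have hshift : minorN B (S.erase 1) (T.erase (T.orderEmbOfFin hTcard j'))
          = minorN (fun i j => B (i+1) j) ((S.erase 1).image (fun x => x - 1))
              (T.erase (T.orderEmbOfFin hTcard j')) :=
        minorN_shift B (fun x hx => by have := hSemem x hx; omega) (by omega)
      have hIH := ih n (fun i j => B (i+1) j) ((S.erase 1).image (fun x => x - 1))
        (T.erase (T.orderEmbOfFin hTcard j')) hS''sub hTesub (by omega)
      -- step C : identification with the A submatrix
      have hAsub : minorN (theta m n (fun i j => B (i+1) j)) (Finset.Icc 1 m)
            ((Finset.Icc 1 m \ (S.erase 1).image (fun x => x - 1)) ∪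
              (T.erase (T.orderEmbOfFin hTcard j')).image fun u => m + n + 1 - u)
          = (A.submatrix Fin.succ
              (⟨r + (k - (j' : ℕ)), by omega⟩ : Fin (r+k+1)).succAbove).det := by
        rw [minorN_eq' _ hIccmR hIsubR]
        -- key embedding identity
        have hEr : (((Finset.Icc 1 (m+1) \ S) ∪ T.image fun t => m + 1 + n + 1 - t).erase
            (((Finset.Icc 1 (m+1) \ S) ∪ T.image fun t => m + 1 + n + 1 - t).orderEmbOfFin
              hIcardR ⟨r + (k - (j' : ℕ)), by omega⟩)).card = r + k := by
          rw [Finset.card_erase_of_mem (Finset.orderEmbOfFin_mem _ hIcardR _), hIcardR]; omega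
        have herase3 := orderEmbOfFin_erase hIcardR ⟨r + (k - (j' : ℕ)), by omega⟩ hEr
        simp only [hembIval j'] at herase3
        have hplus : ∀ x ∈ ((Finset.Icc 1 m \ (S.erase 1).image (fun x => x - 1)) ∪
            (T.erase (T.orderEmbOfFin hTcard j')).image fun u => m + n + 1 - u),
            x + 1 ∈ (((Finset.Icc 1 (m+1) \ S) ∪ T.image fun t => m + 1 + n + 1 - t).erase
              (m + 1 + n + 1 - T.orderEmbOfFin hTcard j')) := by
          intro x hmem
          rcases Finset.mem_union.1 hmem with hx | hx
          · have hx' := Finset.mem_sdiff.1 hx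
            have hxm := Finset.mem_Icc.1 hx'.1
            refine Finset.mem_erase.2 ⟨by omega, Finset.mem_union_left _
              (Finset.mem_sdiff.2 ⟨Finset.mem_Icc.2 ⟨by omega, by omega⟩, ?_⟩)⟩
            intro hxs
            refine hx'.2 (Finset.mem_image.2 ⟨x + 1, ?_, by omega⟩)
            exact Finset.mem_erase.2 ⟨by omega, hxs⟩
          · obtain ⟨u, hu, hfu⟩ := Finset.mem_image.1 hx
            have hfu' : m + n + 1 - u = x := hfu
            have hu' := Finset.mem_erase.1 hu
            have hub := hTmem u hu'.2
            refine Finset.mem_erase.2 ⟨by omega, Finset.mem_union_right _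
              (Finset.mem_image.2 ⟨u, hu'.2, by omega⟩)⟩
        have huniq : (fun j : Fin (r+k) =>
            ((Finset.Icc 1 m \ (S.erase 1).image (fun x => x - 1)) ∪
              (T.erase (T.orderEmbOfFin hTcard j')).image fun u => m + n + 1 - u).orderEmbOfFin
                hIsubR j + 1)
            = (((Finset.Icc 1 (m+1) \ S) ∪ T.image fun t => m + 1 + n + 1 - t).erase
                (m + 1 + n + 1 - T.orderEmbOfFin hTcard j')).orderEmbOfFin
                  (by rwa [hembIval j'] at hEr) := by
          apply Finset.orderEmbOfFin_unique
          · intro j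
            exact hplus _ (Finset.orderEmbOfFin_mem _ hIsubR j)
          · intro a b hab
            have := (((Finset.Icc 1 m \ (S.erase 1).image (fun x => x - 1)) ∪
              (T.erase (T.orderEmbOfFin hTcard j')).image fun u =>
                m + n + 1 - u).orderEmbOfFin hIsubR).strictMono hab
            exact Nat.add_lt_add_right this 1
        have hkey2 : ∀ j : Fin (r+k),
            ((Finset.Icc 1 (m+1) \ S) ∪ T.image fun t => m + 1 + n + 1 - t).orderEmbOfFin
              hIcardR ((⟨r + (k - (j' : ℕ)), by omega⟩ : Fin (r+k+1)).succAbove j)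
            = ((Finset.Icc 1 m \ (S.erase 1).image (fun x => x - 1)) ∪
                (T.erase (T.orderEmbOfFin hTcard j')).image fun u =>
                  m + n + 1 - u).orderEmbOfFin hIsubR j + 1 := by
          intro j
          rw [← herase3 j]
          exact (congrFun huniq j).symm
        congr 1
        ext i j
        simp only [hA, Matrix.submatrix_apply, Matrix.of_apply]
        rw [orderEmbOfFin_Icc, orderEmbOfFin_Icc, hkey2 j, Fin.val_succ]
        exact theta_shift m n B i _
      -- assemble
      rw [hLsub, hshift, hIH, hAsub, hAtop, hLtop]
      have hsign : (-1:ℝ)^(((⟨r + (k - (j' : ℕ)), by omega⟩ : Fin (r+k+1)) : ℕ)) * (-1:ℝ)^m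
          = (-1:ℝ)^((j' : ℕ)) := by
        rw [show (((⟨r + (k - (j' : ℕ)), by omega⟩ : Fin (r+k+1)) : ℕ))
            = r + (k - (j' : ℕ)) from rfl, ← pow_add]
        apply neg_one_pow_congr'
        omega
      rw [← hsign]
      ring
    · -- case 1 ∉ S
      have hS'sub : S.image (fun x => x - 1) ⊆ Finset.Icc 1 m := by
        intro x hx
        obtain ⟨s, hs, rfl⟩ := Finset.mem_image.1 hx
        have h2 := hSmem s hs
        have h3 : s ≠ 1 := fun h => h1 (h ▸ hs)
        exact Finset.mem_Icc.2 ⟨by omega, by omega⟩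
      have hS'card : (S.image (fun x => x - 1)).card = S.card :=
        Finset.card_image_of_injOn (fun x hx y hy hxy => by
          have := hSmem x hx; have := hSmem y hy; omega)
      have hI'card : ((Finset.Icc 1 m \ S.image (fun x => x - 1)) ∪
          T.image fun t => m + n + 1 - t).card = m :=
        card_I hS'sub hT hS'card (by omega)
      have step1 : minorN B S T = minorN (fun i j => B (i+1) j) (S.image (fun x => x - 1)) T :=
        minorN_shift B (fun x hx => (hSmem x hx).1) hST.symm
      have step2 := ih n (fun i j => B (i+1) j) (S.image (fun x => x - 1)) T hS'sub hT
        (by rw [hS'card, hST])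
      rw [step1, step2]
      rw [minorN_eq' _ hIccm hI'card, minorN_eq' _ hIccCard hIcard]
      rw [Matrix.det_succ_column_zero]
      have h1I : (1:ℕ) ∈ (Finset.Icc 1 (m+1) \ S) ∪ T.image fun t => m + 1 + n + 1 - t :=
        Finset.mem_union_left _ (Finset.mem_sdiff.2 ⟨Finset.mem_Icc.2 ⟨le_refl 1, by omega⟩, h1⟩)
      have hembI0 : ((Finset.Icc 1 (m+1) \ S) ∪ T.image fun t => m + 1 + n + 1 - t).orderEmbOfFin
          hIcard 0 = 1 := orderEmbOfFin_zero_min hIcard h1I hImem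
      have herase : (((Finset.Icc 1 (m+1) \ S) ∪ T.image fun t => m + 1 + n + 1 - t).erase 1).card
          = m := by rw [Finset.card_erase_of_mem h1I, hIcard]; omega
      -- main emb identity
      have hmain : ∀ j : Fin m,
          (((Finset.Icc 1 (m+1) \ S) ∪ T.image fun t => m + 1 + n + 1 - t).erase 1).orderEmbOfFin
            herase j
          = ((Finset.Icc 1 m \ S.image (fun x => x - 1)) ∪
              T.image fun t => m + n + 1 - t).orderEmbOfFin hI'card j + 1 := by
        have huniq : (fun j : Fin m => ((Finset.Icc 1 m \ S.image (fun x => x - 1)) ∪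
            T.image fun t => m + n + 1 - t).orderEmbOfFin hI'card j + 1)
            = (((Finset.Icc 1 (m+1) \ S) ∪ T.image fun t => m + 1 + n + 1 - t).erase 1).orderEmbOfFin herase := by
          apply Finset.orderEmbOfFin_unique herase
          · intro j
            have hmem := Finset.orderEmbOfFin_mem _ hI'card j
            set x := ((Finset.Icc 1 m \ S.image (fun x => x - 1)) ∪
              T.image fun t => m + n + 1 - t).orderEmbOfFin hI'card j with hxdef
            rcases Finset.mem_union.1 hmem with hx | hx
            · have hx' := Finset.mem_sdiff.1 hx
              have hxm := Finset.mem_Icc.1 hx'.1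
              refine Finset.mem_erase.2 ⟨by omega, Finset.mem_union_left _
                (Finset.mem_sdiff.2 ⟨Finset.mem_Icc.2 ⟨by omega, by omega⟩, ?_⟩)⟩
              intro hxs
              exact hx'.2 (Finset.mem_image.2 ⟨x+1, hxs, by omega⟩)
            · obtain ⟨t, ht, hfx⟩ := Finset.mem_image.1 hx
              have := hTmem t ht
              refine Finset.mem_erase.2 ⟨by omega, Finset.mem_union_right _
                (Finset.mem_image.2 ⟨t, ht, by omega⟩)⟩
          · intro a b hab
            have := (((Finset.Icc 1 m \ S.image (fun x => x - 1)) ∪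
              T.image fun t => m + n + 1 - t).orderEmbOfFin hI'card).strictMono hab
            exact Nat.add_lt_add_right this 1
        intro j
        exact (congrFun huniq j).symm
      have hkey : ∀ j : Fin m,
          ((Finset.Icc 1 (m+1) \ S) ∪ T.image fun t => m + 1 + n + 1 - t).orderEmbOfFin
            hIcard (Fin.succ j)
          = ((Finset.Icc 1 m \ S.image (fun x => x - 1)) ∪
              T.image fun t => m + n + 1 - t).orderEmbOfFin hI'card j + 1 := by
        intro j
        have herase2 := orderEmbOfFin_erase hIcard 0 (by rw [hembI0]; exact herase) j
        simp only [hembI0, Fin.succAbove_zero] at herase2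
        rw [← herase2]
        exact hmain j
      -- A i 0 = if i = 0 then 1 else 0
      have hA0 : ∀ i : Fin (m+1), theta (m+1) n B
          ((Finset.Icc 1 (m+1)).orderEmbOfFin hIccCard i)
          (((Finset.Icc 1 (m+1) \ S) ∪ T.image fun t => m + 1 + n + 1 - t).orderEmbOfFin hIcard 0)
          = if i = 0 then 1 else 0 := by
        intro i
        rw [hembI0, orderEmbOfFin_Icc]
        unfold theta
        rw [if_pos (show (1:ℕ) ≤ m+1 by omega)]
        by_cases hi : i = 0
        · rw [if_pos (by rw [hi]; rfl), if_pos hi]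
        · rw [if_neg ?_, if_neg hi]
          intro hc
          exact hi (Fin.ext (by simp only [Fin.val_zero]; omega))
      rw [Fintype.sum_eq_single (0 : Fin (m+1)) (fun i hi => by
        simp only [Matrix.of_apply]
        rw [hA0 i, if_neg hi]
        ring)]
      simp only [Matrix.of_apply]
      rw [hA0 0, if_pos rfl, Fin.succAbove_zero, Fin.val_zero, pow_zero, one_mul, one_mul]
      congr 1
      ext i j
      simp only [Matrix.submatrix_apply, Matrix.of_apply]
      rw [orderEmbOfFin_Icc, orderEmbOfFin_Icc, hkey j, Fin.val_succ]
      exact theta_shift m n B i _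

/-- For `S ⊆ {1,...,m}`, `T ⊆ {1,...,n}` with `|S| = |T|`, the minor of `B` with row set
`S` and column set `T` equals the maximal minor `Δ_I(θ(B))` where
`I = ({1,...,m} \ S) ∪ {m+n+1-t : t ∈ T}`. -/
theorem minor_eq_maximalMinor_theta
    (m n : ℕ) (hm : 1 ≤ m) (hn : 1 ≤ n) (B : ℕ → ℕ → ℝ)
    (S T : Finset ℕ) (hS : S ⊆ Finset.Icc 1 m) (hT : T ⊆ Finset.Icc 1 n)
    (hST : S.card = T.card) :
    minorN B S T =
      minorN (theta m n B) (Finset.Icc 1 m)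
        ((Finset.Icc 1 m \ S) ∪ T.image fun t => m + n + 1 - t) :=
  aux_main m n B S T hS hT hST
end

section
/- Let C be any colouring of the m×n grid (not necessarily a Cauchon diagram), let v be its associated permutation, and for k ∈ {1,...,n} let v^{(k)} be the reading word of the set of black squares (a,b) of C with b ≤ m+k. Then v(j) = v^{(k)}(j) for every j ∈ {1,...,k}. -/
lemma prod_bound {M : ℕ} : ∀ (l : List (Equiv.Perm ℕ)),
    (∀ g ∈ l, ∀ x, x ≤ M → g x ≤ M) → ∀ x, x ≤ M → l.prod x ≤ M := by
  intro l
  induction l with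
  | nil => intro _ x hx; simpa using hx
  | cons g t ih =>
    intro h x hx
    rw [List.prod_cons, Equiv.Perm.mul_apply]
    exact h g List.mem_cons_self _ (ih (fun g' hg' => h g' (List.mem_cons_of_mem _ hg')) x hx)

lemma prod_fix {M : ℕ} : ∀ (l : List (Equiv.Perm ℕ)),
    (∀ g ∈ l, ∀ x, x ≤ M → g x = x) → ∀ x, x ≤ M → l.prod x = x := by
  intro l
  induction l with
  | nil => intro _ x _; simp
  | cons g t ih =>
    intro h x hx
    rw [List.prod_cons, Equiv.Perm.mul_apply,
      ih (fun g' hg' => h g' (List.mem_cons_of_mem _ hg')) x hx]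
    exact h g List.mem_cons_self x hx

lemma key (k : ℕ) : ∀ (l : List (Equiv.Perm ℕ × Equiv.Perm ℕ)),
    (∀ i (h : i < l.length),
      (∀ x, x ≤ k + (l.length - i) → (l[i]'h).1 x ≤ k + (l.length - i)) ∧
      (∀ x, x ≤ k + (l.length - 1 - i) → (l[i]'h).2 x = x)) →
    ∀ x, x ≤ k →
      (l.map fun p => p.1 * p.2).prod x = (l.map Prod.fst).prod x ∧
      (l.map Prod.fst).prod x ≤ k + l.length := by
  intro l
  induction l with
  | nil => intro _ x hx; simp; omega
  | cons p t ih =>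
    intro h x hx
    have ht : ∀ i (hi : i < t.length),
        (∀ x, x ≤ k + (t.length - i) → (t[i]'hi).1 x ≤ k + (t.length - i)) ∧
        (∀ x, x ≤ k + (t.length - 1 - i) → (t[i]'hi).2 x = x) := by
      intro i hi
      have := h (i + 1) (by simpa using Nat.succ_lt_succ hi)
      simp only [List.length_cons, List.getElem_cons_succ] at this
      refine ⟨fun x hx => ?_, fun x hx => ?_⟩
      · have := this.1 x (by omega)
        omega
      · exact this.2 x (by omega)
    obtain ⟨heq, hle⟩ := ih ht x hx
    have h0 := h 0 (Nat.succ_pos _)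
    simp only [List.length_cons, List.getElem_cons_zero, Nat.sub_zero] at h0
    have hfix : p.2 ((t.map Prod.fst).prod x) = (t.map Prod.fst).prod x := by
      apply h0.2
      omega
    have hb := h0.1 ((t.map Prod.fst).prod x) (by omega)
    constructor
    · simp only [List.map_cons, List.prod_cons, Equiv.Perm.mul_apply, heq, hfix]
    · simp only [List.map_cons, List.prod_cons, Equiv.Perm.mul_apply, List.length_cons]
      omega

lemma swap_bound {c M : ℕ} (h : c + 1 ≤ M) : ∀ x, x ≤ M → Equiv.swap c (c + 1) x ≤ M := by
  intro x hx
  rcases eq_or_ne x c with rfl | h1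
  · rw [Equiv.swap_apply_left]; omega
  rcases eq_or_ne x (c + 1) with rfl | h2
  · rw [Equiv.swap_apply_right]; omega
  · rw [Equiv.swap_apply_of_ne_of_ne h1 h2]; exact hx

lemma swap_fix {c M : ℕ} (h : M < c) : ∀ x, x ≤ M → Equiv.swap c (c + 1) x = x := by
  intro x hx
  exact Equiv.swap_apply_of_ne_of_ne (by omega) (by omega)

lemma sq_eq (m i jj : ℕ) (hi : i < m) :
    sqPerm m (m - i, m + 1 + jj) = Equiv.swap (m - i + jj) (m - i + jj + 1) := by
  unfold sqPerm
  congr 1 <;> simp <;> omega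

/-- For any colouring `col` of the `m × n` grid with associated permutation `v`, and the
reading word `v^{(k)}` of the black squares `(a,b)` with `b ≤ m+k`, one has
`v j = v^{(k)} j` for every `j ∈ {1,...,k}`. -/
theorem assocPerm_eq_truncated_cols_on_initial
    (m n : ℕ) (hm : 2 ≤ m) (hn : 2 ≤ n)
    (col : ℕ × ℕ → Bool)
    (k : ℕ) (hk1 : 1 ≤ k) (hkn : k ≤ n) :
    ∀ j, 1 ≤ j → j ≤ k →
      assocPerm m n col j =
        readingWord m n (fun p => col p && decide (p.2 ≤ m + k)) j := by
  intro j hj1 hjk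
  set A : ℕ → Equiv.Perm ℕ := fun i =>
    ((List.range k).map fun jj =>
      if col (m - i, m + 1 + jj) = true then sqPerm m (m - i, m + 1 + jj) else 1).prod with hA_def
  set B : ℕ → Equiv.Perm ℕ := fun i =>
    ((List.range (n - k)).map fun jj =>
      if col (m - i, m + 1 + (k + jj)) = true then sqPerm m (m - i, m + 1 + (k + jj)) else 1).prod
    with hB_def
  have hrow : ∀ i,
      (((List.range n).map fun jj =>
        if col (m - i, m + 1 + jj) = true then sqPerm m (m - i, m + 1 + jj) else 1)).prod
        = A i * B i := by
    intro i
    rw [show n = k + (n - k) by omega, List.range_add, List.map_append, List.prod_append,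
      List.map_map]
    rfl
  have htrow : ∀ i,
      (((List.range n).map fun jj =>
        if (col (m - i, m + 1 + jj) && decide (m + 1 + jj ≤ m + k)) = true
        then sqPerm m (m - i, m + 1 + jj) else 1)).prod = A i := by
    intro i
    rw [show n = k + (n - k) by omega, List.range_add, List.map_append, List.prod_append,
      List.map_map]
    have e1 : (List.range k).map (fun jj =>
        if (col (m - i, m + 1 + jj) && decide (m + 1 + jj ≤ m + k)) = true
        then sqPerm m (m - i, m + 1 + jj) else 1)
        = (List.range k).map (fun jj =>
        if col (m - i, m + 1 + jj) = true then sqPerm m (m - i, m + 1 + jj) else 1) := by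
      apply List.map_congr_left
      intro jj hjj
      have hlt : jj < k := List.mem_range.1 hjj
      have : m + 1 + jj ≤ m + k := by omega
      simp [this]
    have e2 : ((List.range (n - k)).map ((fun jj =>
        if (col (m - i, m + 1 + jj) && decide (m + 1 + jj ≤ m + k)) = true
        then sqPerm m (m - i, m + 1 + jj) else 1) ∘ (k + ·))).prod = 1 := by
      apply List.prod_eq_one
      intro x hx
      rcases List.mem_map.1 hx with ⟨jj, hjj, rfl⟩
      have : ¬ (m + 1 + (k + jj) ≤ m + k) := by omega
      simp [Function.comp, this]
    rw [e1, e2, mul_one]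
  have hAb : ∀ i, i < m → ∀ x, x ≤ k + (m - i) → A i x ≤ k + (m - i) := by
    intro i hi
    apply prod_bound
    intro g hg
    rcases List.mem_map.1 hg with ⟨jj, hjj, rfl⟩
    have hlt : jj < k := List.mem_range.1 hjj
    split
    · rw [sq_eq m i jj hi]
      exact swap_bound (by omega)
    · intro x hx; simpa using hx
  have hBf : ∀ i, i < m → ∀ x, x ≤ k + (m - 1 - i) → B i x = x := by
    intro i hi
    apply prod_fix
    intro g hg
    rcases List.mem_map.1 hg with ⟨jj, hjj, rfl⟩
    split
    · rw [sq_eq m i (k + jj) hi]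
      exact swap_fix (by omega)
    · intro x hx; simp
  set l : List (Equiv.Perm ℕ × Equiv.Perm ℕ) := (List.range m).map fun i => (A i, B i) with hl
  have hlen : l.length = m := by simp [hl]
  have hcond : ∀ i (h : i < l.length),
      (∀ x, x ≤ k + (l.length - i) → (l[i]'h).1 x ≤ k + (l.length - i)) ∧
      (∀ x, x ≤ k + (l.length - 1 - i) → (l[i]'h).2 x = x) := by
    intro i h
    have him : i < m := by omega
    have : l[i]'h = (A i, B i) := by simp [hl]
    rw [this, hlen]
    exact ⟨hAb i him, hBf i him⟩
  have hkey := key k l hcond j hjk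
  have e3 : readingWord m n col = (l.map fun p => p.1 * p.2).prod := by
    unfold readingWord
    rw [hl, List.map_map]
    apply congrArg
    apply List.map_congr_left
    intro i _
    exact hrow i
  have e4 : readingWord m n (fun p => col p && decide (p.2 ≤ m + k)) = (l.map Prod.fst).prod := by
    unfold readingWord
    rw [hl, List.map_map]
    apply congrArg
    apply List.map_congr_left
    intro i _
    exact htrow i
  rw [show assocPerm m n col = readingWord m n col from rfl, e3, e4]
  exact hkey.1
end
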